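/- arXiv:1805.11687 — 7 statements merged into one kernel-verified Lean document; each statement's English description precedes it below -/
import Mathlib

section
/- Let H and G be real Hilbert spaces and adopt the primal-dual algorithm setting. Then for every integer k ≥ 1 and every primal-dual solution (x̂, û), the following inequality holds: ‖x^k − x̂‖²/τ_k + ‖u^k − û‖²/γ_k ≥ (2ρτ_k + 1)·‖p^{k+1} − x̂‖²/τ_k + (1/τ_k − 1/(2β))·‖p^{k+1} − x^k‖² + (2χγ_k + 1)·‖η^{k+1} − û‖²/γ_k + (1/γ_k − 1/(2δ))·‖η^{k+1} − u^k‖² + 2⟨L(p^{k+1} − x^k), η^{k+1} − û⟩ − 2θ_{k−1}⟨L(p^k − x^{k−1}), η^k − û⟩ − 2θ_{k−1}‖L‖·‖p^k − x^{k−1}‖·‖η^{k+1} − u^k‖. -/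
open RealInnerProductSpace

set_option maxHeartbeats 1000000 in
/-- Theorem 3.2(i): the fundamental one-iteration inequality of the projected
primal-dual algorithm. -/
theorem stmt_0 {H G : Type*}
    [NormedAddCommGroup H] [InnerProductSpace ℝ H] [CompleteSpace H]
    [NormedAddCommGroup G] [InnerProductSpace ℝ G] [CompleteSpace G]
    (V : Submodule ℝ G) [CompleteSpace V]
    (L : H →L[ℝ] G) (hL0 : L ≠ 0) (hran : ∀ z, L z ∈ V)
    (ρ χ β δ : ℝ) (hρ : 0 ≤ ρ) (hχ : 0 ≤ χ) (hβ : 0 < β) (hδ : 0 < δ)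
    (A : H → Set H)
    (hA : ∀ x y u v, u ∈ A x → v ∈ A y → ρ * ‖x - y‖ ^ 2 ≤ ⟪x - y, u - v⟫)
    (B : G → Set G)
    (hB : ∀ x y u v, u ∈ B x → v ∈ B y → χ * ‖x - y‖ ^ 2 ≤ ⟪x - y, u - v⟫)
    (C : H → H) (hC : ∀ x y, β * ‖C x - C y‖ ^ 2 ≤ ⟪C x - C y, x - y⟫)
    (D : G → G) (hD : ∀ x y, δ * ‖D x - D y‖ ^ 2 ≤ ⟪D x - D y, x - y⟫)
    (α : ℝ) (hα : α ∈ Set.Ioo (0 : ℝ) 1)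
    (T : H → H) (hTfix : ∃ z, T z = z)
    (hT : ∀ z y, T y = y → ‖T z - y‖ ^ 2 ≤ ‖z - y‖ ^ 2 - ((1 - α) / α) * ‖z - T z‖ ^ 2)
    (θ τ' γ' : ℕ → ℝ)
    (hθ : ∀ k, θ k ∈ Set.Ioc (0 : ℝ) 1)
    (hτ' : ∀ k, τ' k ∈ Set.Ioo (0 : ℝ) (2 * β))
    (hγ' : ∀ k, γ' k ∈ Set.Ioo (0 : ℝ) (2 * δ))
    (x p xb : ℕ → H) (u η : ℕ → G)
    (hxb0 : xb 0 = x 0)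
    (halg1 : ∀ k, (γ' k)⁻¹ • (u k - η (k + 1)) + L (xb k) - D (u k) ∈ B (η (k + 1)))
    (halg2 : ∀ k, u (k + 1) = (V.orthogonalProjectionOnto (η (k + 1)) : G))
    (halg3 : ∀ k, (τ' k)⁻¹ • (x k - p (k + 1))
        - (ContinuousLinearMap.adjoint L) (u (k + 1)) - C (x k) ∈ A (p (k + 1)))
    (halg4 : ∀ k, x (k + 1) = T (p (k + 1)))
    (halg5 : ∀ k, xb (k + 1) = x (k + 1) + θ k • (p (k + 1) - x k)) :
    ∀ k : ℕ, 1 ≤ k → ∀ (xhat : H) (uhat : G), T xhat = xhat → uhat ∈ V →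
      -(ContinuousLinearMap.adjoint L) uhat - C xhat ∈ A xhat →
      L xhat - D uhat ∈ B uhat →
      ‖x k - xhat‖ ^ 2 / τ' k + ‖u k - uhat‖ ^ 2 / γ' k ≥
        (2 * ρ * τ' k + 1) * ‖p (k + 1) - xhat‖ ^ 2 / τ' k
        + (1 / τ' k - 1 / (2 * β)) * ‖p (k + 1) - x k‖ ^ 2
        + (2 * χ * γ' k + 1) * ‖η (k + 1) - uhat‖ ^ 2 / γ' k
        + (1 / γ' k - 1 / (2 * δ)) * ‖η (k + 1) - u k‖ ^ 2
        + 2 * ⟪L (p (k + 1) - x k), η (k + 1) - uhat⟫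
        - 2 * θ (k - 1) * ⟪L (p k - x (k - 1)), η k - uhat⟫
        - 2 * θ (k - 1) * ‖L‖ * ‖p k - x (k - 1)‖ * ‖η (k + 1) - u k‖ := by
  intro k hk xhat uhat hTx huV hAsol hBsol
  obtain ⟨m, rfl⟩ : ∃ m, k = m + 1 := ⟨k - 1, (Nat.succ_pred_eq_of_pos hk).symm⟩
  simp only [Nat.add_sub_cancel]
  have hτ0 : 0 < τ' (m + 1) := (hτ' _).1
  have hγ0 : 0 < γ' (m + 1) := (hγ' _).1
  have hθm : 0 < θ m := (hθ m).1
  -- orthogonality facts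
  have hperp : ∀ (z : H) (n : ℕ),
      ⟪L z, η n - (V.orthogonalProjectionOnto (η n) : G)⟫ = 0 := fun z n =>
    (Submodule.mem_orthogonal V _).1 (by have h := V.sub_starProjection_mem_orthogonal (η n); rwa [Submodule.starProjection_apply] at h) _ (hran z)
  have hproj : ∀ (z : H) (n : ℕ),
      ⟪L z, u (n + 1) - uhat⟫ = ⟪L z, η (n + 1) - uhat⟫ := by
    intro z n
    have h0 : ⟪L z, η (n + 1) - u (n + 1)⟫ = 0 := by
      rw [halg2 n]; exact hperp z (n + 1)
    have h1 : ⟪L z, η (n + 1) - uhat⟫ - ⟪L z, u (n + 1) - uhat⟫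
        = ⟪L z, η (n + 1) - u (n + 1)⟫ := by
      rw [← inner_sub_right]; congr 1; abel
    linarith
  -- Primal monotonicity inequality
  have h1 := hA (p (m + 1 + 1)) xhat _ _ (halg3 (m + 1)) hAsol
  have e1 : ⟪p (m + 1 + 1) - xhat,
      ((τ' (m + 1))⁻¹ • (x (m + 1) - p (m + 1 + 1))
        - (ContinuousLinearMap.adjoint L) (u (m + 1 + 1)) - C (x (m + 1)))
      - (-(ContinuousLinearMap.adjoint L) uhat - C xhat)⟫
      = (τ' (m + 1))⁻¹ * ⟪p (m + 1 + 1) - xhat, x (m + 1) - p (m + 1 + 1)⟫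
        - ⟪L (p (m + 1 + 1) - xhat), u (m + 1 + 1) - uhat⟫
        - ⟪p (m + 1 + 1) - xhat, C (x (m + 1)) - C xhat⟫ := by
    simp only [inner_sub_left, inner_sub_right, inner_add_right, inner_neg_right,
      real_inner_smul_right, ContinuousLinearMap.adjoint_inner_right, map_sub]
    ring
  have h2 : ρ * ‖p (m + 1 + 1) - xhat‖ ^ 2
      ≤ (τ' (m + 1))⁻¹ * ⟪p (m + 1 + 1) - xhat, x (m + 1) - p (m + 1 + 1)⟫
        - ⟪L (p (m + 1 + 1) - xhat), η (m + 1 + 1) - uhat⟫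
        - ⟪p (m + 1 + 1) - xhat, C (x (m + 1)) - C xhat⟫ := by
    rw [← hproj (p (m + 1 + 1) - xhat) (m + 1), ← e1]; exact h1
  -- norm identity (primal)
  have id1 : ‖x (m + 1) - xhat‖ ^ 2 = ‖p (m + 1 + 1) - xhat‖ ^ 2
      + 2 * ⟪p (m + 1 + 1) - xhat, x (m + 1) - p (m + 1 + 1)⟫
      + ‖x (m + 1) - p (m + 1 + 1)‖ ^ 2 := by
    have h := norm_add_sq_real (p (m + 1 + 1) - xhat) (x (m + 1) - p (m + 1 + 1))
    rw [show p (m + 1 + 1) - xhat + (x (m + 1) - p (m + 1 + 1)) = x (m + 1) - xhat from by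
      abel] at h
    linarith
  have nf1 : ‖x (m + 1) - p (m + 1 + 1)‖ ^ 2 = ‖p (m + 1 + 1) - x (m + 1)‖ ^ 2 := by
    rw [norm_sub_rev]
  have ex2 : (τ' (m + 1))⁻¹ * ⟪p (m + 1 + 1) - xhat, x (m + 1) - p (m + 1 + 1)⟫
      = ‖x (m + 1) - xhat‖ ^ 2 / τ' (m + 1) / 2
        - ‖p (m + 1 + 1) - xhat‖ ^ 2 / τ' (m + 1) / 2
        - ‖p (m + 1 + 1) - x (m + 1)‖ ^ 2 / τ' (m + 1) / 2 := by
    rw [show ⟪p (m + 1 + 1) - xhat, x (m + 1) - p (m + 1 + 1)⟫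
        = (‖x (m + 1) - xhat‖ ^ 2 - ‖p (m + 1 + 1) - xhat‖ ^ 2
          - ‖p (m + 1 + 1) - x (m + 1)‖ ^ 2) / 2 from by linarith]
    ring
  -- cocoercivity bound (primal)
  have cb1 : -⟪p (m + 1 + 1) - xhat, C (x (m + 1)) - C xhat⟫
      ≤ ‖p (m + 1 + 1) - x (m + 1)‖ ^ 2 / (4 * β) := by
    have hc := hC (x (m + 1)) xhat
    have hsplit : ⟪p (m + 1 + 1) - xhat, C (x (m + 1)) - C xhat⟫
        = ⟪x (m + 1) - xhat, C (x (m + 1)) - C xhat⟫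
          + ⟪p (m + 1 + 1) - x (m + 1), C (x (m + 1)) - C xhat⟫ := by
      rw [← inner_add_left]; congr 1; abel
    have hcomm : ⟪x (m + 1) - xhat, C (x (m + 1)) - C xhat⟫
        = ⟪C (x (m + 1)) - C xhat, x (m + 1) - xhat⟫ := real_inner_comm _ _
    have hcs : -(‖p (m + 1 + 1) - x (m + 1)‖ * ‖C (x (m + 1)) - C xhat‖)
        ≤ ⟪p (m + 1 + 1) - x (m + 1), C (x (m + 1)) - C xhat⟫ :=
      neg_le_of_abs_le (abs_real_inner_le_norm _ _)
    rw [le_div_iff₀ (by positivity)]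
    nlinarith [sq_nonneg (‖p (m + 1 + 1) - x (m + 1)‖ - 2 * β * ‖C (x (m + 1)) - C xhat‖)]
  -- Dual monotonicity inequality
  have h3 := hB (η (m + 1 + 1)) uhat _ _ (halg1 (m + 1)) hBsol
  have e2 : ⟪η (m + 1 + 1) - uhat,
      ((γ' (m + 1))⁻¹ • (u (m + 1) - η (m + 1 + 1)) + L (xb (m + 1)) - D (u (m + 1)))
      - (L xhat - D uhat)⟫
      = (γ' (m + 1))⁻¹ * ⟪η (m + 1 + 1) - uhat, u (m + 1) - η (m + 1 + 1)⟫
        + ⟪η (m + 1 + 1) - uhat, L (x (m + 1) - xhat)⟫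
        + θ m * ⟪η (m + 1 + 1) - uhat, L (p (m + 1) - x m)⟫
        - ⟪η (m + 1 + 1) - uhat, D (u (m + 1)) - D uhat⟫ := by
    rw [halg5 m]
    simp only [map_add, map_smul, map_sub, inner_sub_left, inner_sub_right, inner_add_right,
      real_inner_smul_right]
    ring
  have h4 : χ * ‖η (m + 1 + 1) - uhat‖ ^ 2
      ≤ (γ' (m + 1))⁻¹ * ⟪η (m + 1 + 1) - uhat, u (m + 1) - η (m + 1 + 1)⟫
        + ⟪η (m + 1 + 1) - uhat, L (x (m + 1) - xhat)⟫
        + θ m * ⟪η (m + 1 + 1) - uhat, L (p (m + 1) - x m)⟫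
        - ⟪η (m + 1 + 1) - uhat, D (u (m + 1)) - D uhat⟫ := by
    rw [← e2]; exact h3
  -- norm identity (dual)
  have id2 : ‖u (m + 1) - uhat‖ ^ 2 = ‖η (m + 1 + 1) - uhat‖ ^ 2
      + 2 * ⟪η (m + 1 + 1) - uhat, u (m + 1) - η (m + 1 + 1)⟫
      + ‖u (m + 1) - η (m + 1 + 1)‖ ^ 2 := by
    have h := norm_add_sq_real (η (m + 1 + 1) - uhat) (u (m + 1) - η (m + 1 + 1))
    rw [show η (m + 1 + 1) - uhat + (u (m + 1) - η (m + 1 + 1)) = u (m + 1) - uhat from by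
      abel] at h
    linarith
  have nf2 : ‖u (m + 1) - η (m + 1 + 1)‖ ^ 2 = ‖η (m + 1 + 1) - u (m + 1)‖ ^ 2 := by
    rw [norm_sub_rev]
  have ex3 : (γ' (m + 1))⁻¹ * ⟪η (m + 1 + 1) - uhat, u (m + 1) - η (m + 1 + 1)⟫
      = ‖u (m + 1) - uhat‖ ^ 2 / γ' (m + 1) / 2
        - ‖η (m + 1 + 1) - uhat‖ ^ 2 / γ' (m + 1) / 2
        - ‖η (m + 1 + 1) - u (m + 1)‖ ^ 2 / γ' (m + 1) / 2 := by
    rw [show ⟪η (m + 1 + 1) - uhat, u (m + 1) - η (m + 1 + 1)⟫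
        = (‖u (m + 1) - uhat‖ ^ 2 - ‖η (m + 1 + 1) - uhat‖ ^ 2
          - ‖η (m + 1 + 1) - u (m + 1)‖ ^ 2) / 2 from by linarith]
    ring
  -- cocoercivity bound (dual)
  have cb2 : -⟪η (m + 1 + 1) - uhat, D (u (m + 1)) - D uhat⟫
      ≤ ‖η (m + 1 + 1) - u (m + 1)‖ ^ 2 / (4 * δ) := by
    have hd := hD (u (m + 1)) uhat
    have hsplit : ⟪η (m + 1 + 1) - uhat, D (u (m + 1)) - D uhat⟫
        = ⟪u (m + 1) - uhat, D (u (m + 1)) - D uhat⟫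
          + ⟪η (m + 1 + 1) - u (m + 1), D (u (m + 1)) - D uhat⟫ := by
      rw [← inner_add_left]; congr 1; abel
    have hcomm : ⟪u (m + 1) - uhat, D (u (m + 1)) - D uhat⟫
        = ⟪D (u (m + 1)) - D uhat, u (m + 1) - uhat⟫ := real_inner_comm _ _
    have hcs : -(‖η (m + 1 + 1) - u (m + 1)‖ * ‖D (u (m + 1)) - D uhat‖)
        ≤ ⟪η (m + 1 + 1) - u (m + 1), D (u (m + 1)) - D uhat⟫ :=
      neg_le_of_abs_le (abs_real_inner_le_norm _ _)
    rw [le_div_iff₀ (by positivity)]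
    nlinarith [sq_nonneg (‖η (m + 1 + 1) - u (m + 1)‖ - 2 * δ * ‖D (u (m + 1)) - D uhat‖)]
  -- bridge for cross terms
  have tbridge : ⟪L (p (m + 1 + 1) - xhat), η (m + 1 + 1) - uhat⟫
      = ⟪L (p (m + 1 + 1) - x (m + 1)), η (m + 1 + 1) - uhat⟫
        + ⟪η (m + 1 + 1) - uhat, L (x (m + 1) - xhat)⟫ := by
    rw [show (⟪η (m + 1 + 1) - uhat, L (x (m + 1) - xhat)⟫ : ℝ)
        = ⟪L (x (m + 1) - xhat), η (m + 1 + 1) - uhat⟫ from real_inner_comm _ _,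
      ← inner_add_left, ← map_add,
      show p (m + 1 + 1) - x (m + 1) + (x (m + 1) - xhat) = p (m + 1 + 1) - xhat from by abel]
  -- the θ cross-term estimate
  have hq2 : ⟪η (m + 1 + 1) - uhat, L (p (m + 1) - x m)⟫
      = ⟪L (p (m + 1) - x m), u (m + 1) - uhat⟫
        + ⟪L (p (m + 1) - x m), η (m + 1 + 1) - u (m + 1)⟫ := by
    rw [real_inner_comm, ← inner_add_right,
      show u (m + 1) - uhat + (η (m + 1 + 1) - u (m + 1)) = η (m + 1 + 1) - uhat from by abel]
  have hq3 : ⟪L (p (m + 1) - x m), η (m + 1 + 1) - u (m + 1)⟫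
      ≤ ‖L‖ * ‖p (m + 1) - x m‖ * ‖η (m + 1 + 1) - u (m + 1)‖ :=
    le_trans (real_inner_le_norm _ _)
      (mul_le_mul_of_nonneg_right (L.le_opNorm _) (norm_nonneg _))
  have crossθ : 2 * θ m * ⟪η (m + 1 + 1) - uhat, L (p (m + 1) - x m)⟫
      ≤ 2 * θ m * ⟪L (p (m + 1) - x m), η (m + 1) - uhat⟫
        + 2 * θ m * ‖L‖ * ‖p (m + 1) - x m‖ * ‖η (m + 1 + 1) - u (m + 1)‖ := by
    rw [hq2, hproj (p (m + 1) - x m) m]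
    have h0 : 0 ≤ θ m * (‖L‖ * ‖p (m + 1) - x m‖ * ‖η (m + 1 + 1) - u (m + 1)‖
        - ⟪L (p (m + 1) - x m), η (m + 1 + 1) - u (m + 1)⟫) :=
      mul_nonneg hθm.le (sub_nonneg.2 hq3)
    nlinarith [h0]
  -- goal-side coefficient expansions
  have gex1 : (2 * ρ * τ' (m + 1) + 1) * ‖p (m + 1 + 1) - xhat‖ ^ 2 / τ' (m + 1)
      = 2 * ρ * ‖p (m + 1 + 1) - xhat‖ ^ 2
        + ‖p (m + 1 + 1) - xhat‖ ^ 2 / τ' (m + 1) := by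
    field_simp
  have gex2 : (2 * χ * γ' (m + 1) + 1) * ‖η (m + 1 + 1) - uhat‖ ^ 2 / γ' (m + 1)
      = 2 * χ * ‖η (m + 1 + 1) - uhat‖ ^ 2
        + ‖η (m + 1 + 1) - uhat‖ ^ 2 / γ' (m + 1) := by
    field_simp
  have ebr1 : ‖p (m + 1 + 1) - x (m + 1)‖ ^ 2 / (4 * β)
      = 1 / (2 * β) * ‖p (m + 1 + 1) - x (m + 1)‖ ^ 2 / 2 := by
    rw [eq_div_iff (two_ne_zero), div_mul_eq_mul_div, div_mul_eq_mul_div, mul_comm]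
    rw [div_eq_div_iff (by positivity) (by positivity)]
    ring
  have ebr2 : ‖η (m + 1 + 1) - u (m + 1)‖ ^ 2 / (4 * δ)
      = 1 / (2 * δ) * ‖η (m + 1 + 1) - u (m + 1)‖ ^ 2 / 2 := by
    rw [eq_div_iff (two_ne_zero), div_mul_eq_mul_div, div_mul_eq_mul_div, mul_comm]
    rw [div_eq_div_iff (by positivity) (by positivity)]
    ring
  have gex3 : (1 / τ' (m + 1) - 1 / (2 * β)) * ‖p (m + 1 + 1) - x (m + 1)‖ ^ 2
      = ‖p (m + 1 + 1) - x (m + 1)‖ ^ 2 / τ' (m + 1)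
        - 1 / (2 * β) * ‖p (m + 1 + 1) - x (m + 1)‖ ^ 2 := by ring
  have gex4 : (1 / γ' (m + 1) - 1 / (2 * δ)) * ‖η (m + 1 + 1) - u (m + 1)‖ ^ 2
      = ‖η (m + 1 + 1) - u (m + 1)‖ ^ 2 / γ' (m + 1)
        - 1 / (2 * δ) * ‖η (m + 1 + 1) - u (m + 1)‖ ^ 2 := by ring
  have ebr1' : ‖p (m + 1 + 1) - x (m + 1)‖ ^ 2 / (4 * β)
      = 1 / (2 * β) * ‖p (m + 1 + 1) - x (m + 1)‖ ^ 2 / 2 := ebr1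
  linarith [h2, h4, ex2, ex3, cb1, cb2, nf1, nf2, tbridge, crossθ, gex1, gex2, gex3, gex4,
    ebr1, ebr2]
end

section
/- Let H and G be real Hilbert spaces and adopt the primal-dual algorithm setting with ρ > 0 and χ > 0. Define μ = 2√(ρχ)/‖L‖ and α = min{ μρ/(ρ + μ/(4β)), μχ/(χ + μ/(4δ)) }. Suppose θ_k ≡ θ with θ ∈ (1/(1+α), 1], τ_k ≡ τ = 2βμ/(μ + 4βρ), γ_k ≡ γ = 2μδ/(μ + 4δχ), and set ω = (1+θ)/(2+α). Then ω ∈ [1/(1+α), θ) and for every primal-dual solution (x̂, û) and every k ∈ ℕ: (χ(1−ω) + μ/(4δ))‖u^k − û‖² + (ρ + μ/(4β))‖x^k − x̂‖² ≤ ω^k·( (χ + μ/(4δ))‖u⁰ − û‖² + (ρ + μ/(4β))‖x⁰ − x̂‖² ); in particular the iterates converge linearly. -/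
open RealInnerProductSpace

private lemma inner_three {E : Type*} [NormedAddCommGroup E] [InnerProductSpace ℝ E]
    (a b c : E) : 2 * ⟪a - c, b - a⟫ = ‖b - c‖ ^ 2 - ‖a - c‖ ^ 2 - ‖a - b‖ ^ 2 := by
  have h : ‖b - c‖ ^ 2 = ‖(b - a) + (a - c)‖ ^ 2 := by
    rw [show b - a + (a - c) = b - c from by abel]
  rw [h, norm_add_sq_real, norm_sub_rev a b, real_inner_comm (b - a) (a - c)]
  ring

private lemma proj_sq_le {G : Type*} [NormedAddCommGroup G] [InnerProductSpace ℝ G]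
    (V : Submodule ℝ G) [CompleteSpace V] (η w : G) (hw : w ∈ V) :
    ‖(V.orthogonalProjection η : G) - w‖ ^ 2 ≤ ‖η - w‖ ^ 2 := by
  have hperp : ⟪η - (V.orthogonalProjection η : G), (V.orthogonalProjection η : G) - w⟫ = 0 :=
    V.starProjection_inner_eq_zero η _ (Submodule.sub_mem V (V.orthogonalProjection η).2 hw)
  have h : ‖η - w‖ ^ 2
      = ‖η - (V.orthogonalProjection η : G)‖ ^ 2 + ‖(V.orthogonalProjection η : G) - w‖ ^ 2 := by
    rw [show η - w = (η - (V.orthogonalProjection η : G)) + ((V.orthogonalProjection η : G) - w)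
      from by abel, norm_add_sq_real, hperp]
    ring
  nlinarith [sq_nonneg ‖η - (V.orthogonalProjection η : G)‖]

set_option maxHeartbeats 2000000 in
/-- Theorem 3.2(iv): linear convergence of the projected primal-dual algorithm
when both A and B are strongly monotone (ρ > 0, χ > 0). -/
theorem stmt_3 {H G : Type*}
    [NormedAddCommGroup H] [InnerProductSpace ℝ H] [CompleteSpace H]
    [NormedAddCommGroup G] [InnerProductSpace ℝ G] [CompleteSpace G]
    (V : Submodule ℝ G) [CompleteSpace V]
    (L : H →L[ℝ] G) (hL0 : L ≠ 0) (hran : ∀ z, L z ∈ V)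
    (ρ χ β δ : ℝ) (hρ : 0 < ρ) (hχ : 0 < χ) (hβ : 0 < β) (hδ : 0 < δ)
    (A : H → Set H)
    (hA : ∀ x y u v, u ∈ A x → v ∈ A y → ρ * ‖x - y‖ ^ 2 ≤ ⟪x - y, u - v⟫)
    (B : G → Set G)
    (hB : ∀ x y u v, u ∈ B x → v ∈ B y → χ * ‖x - y‖ ^ 2 ≤ ⟪x - y, u - v⟫)
    (C : H → H) (hC : ∀ x y, β * ‖C x - C y‖ ^ 2 ≤ ⟪C x - C y, x - y⟫)
    (D : G → G) (hD : ∀ x y, δ * ‖D x - D y‖ ^ 2 ≤ ⟪D x - D y, x - y⟫)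
    (a : ℝ) (ha : a ∈ Set.Ioo (0 : ℝ) 1)
    (T : H → H) (hTfix : ∃ z, T z = z)
    (hT : ∀ z y, T y = y → ‖T z - y‖ ^ 2 ≤ ‖z - y‖ ^ 2 - ((1 - a) / a) * ‖z - T z‖ ^ 2)
    (μ α : ℝ)
    (hμ : μ = 2 * Real.sqrt (ρ * χ) / ‖L‖)
    (hαdef : α = min (μ * ρ / (ρ + μ / (4 * β))) (μ * χ / (χ + μ / (4 * δ))))
    (θ τ γ ω : ℝ)
    (hθ : θ ∈ Set.Ioc (1 / (1 + α)) 1)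
    (hτdef : τ = 2 * β * μ / (μ + 4 * β * ρ))
    (hγdef : γ = 2 * μ * δ / (μ + 4 * δ * χ))
    (hωdef : ω = (1 + θ) / (2 + α))
    (x p xb : ℕ → H) (u η : ℕ → G)
    (hxb0 : xb 0 = x 0) (hp0 : p 0 = x 0)
    (halg1 : ∀ k, γ⁻¹ • (u k - η (k + 1)) + L (xb k) - D (u k) ∈ B (η (k + 1)))
    (halg2 : ∀ k, u (k + 1) = (V.orthogonalProjection (η (k + 1)) : G))
    (halg3 : ∀ k, τ⁻¹ • (x k - p (k + 1))
        - (ContinuousLinearMap.adjoint L) (u (k + 1)) - C (x k) ∈ A (p (k + 1)))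
    (halg4 : ∀ k, x (k + 1) = T (p (k + 1)))
    (halg5 : ∀ k, xb (k + 1) = x (k + 1) + θ • (p (k + 1) - x k)) :
    ω ∈ Set.Ico (1 / (1 + α)) θ ∧
      ∀ (xhat : H) (uhat : G), T xhat = xhat → uhat ∈ V →
        -(ContinuousLinearMap.adjoint L) uhat - C xhat ∈ A xhat →
        L xhat - D uhat ∈ B uhat →
        ∀ k : ℕ,
          (χ * (1 - ω) + μ / (4 * δ)) * ‖u k - uhat‖ ^ 2
              + (ρ + μ / (4 * β)) * ‖x k - xhat‖ ^ 2 ≤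
            ω ^ k * ((χ + μ / (4 * δ)) * ‖u 0 - uhat‖ ^ 2
              + (ρ + μ / (4 * β)) * ‖x 0 - xhat‖ ^ 2) := by
  obtain ⟨hθl, hθu⟩ := hθ
  obtain ⟨ha0, ha1⟩ := ha
  have hLpos : (0:ℝ) < ‖L‖ := by
    rcases lt_or_eq_of_le (norm_nonneg L) with h | h
    · exact h
    · exact absurd (norm_eq_zero.mp h.symm) hL0
  have hsqpos : 0 < Real.sqrt (ρ * χ) := Real.sqrt_pos.mpr (by positivity)
  have hμpos : 0 < μ := by rw [hμ]; exact div_pos (by positivity) hLpos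
  have hμL : μ * ‖L‖ = 2 * Real.sqrt (ρ * χ) := by
    rw [hμ]; field_simp
  have hμL2 : (μ * ‖L‖) ^ 2 = 4 * (ρ * χ) := by
    rw [hμL, mul_pow, Real.sq_sqrt (by positivity : (0:ℝ) ≤ ρ * χ)]; ring
  set νβ : ℝ := μ / (4 * β) with hνβdef
  set νδ : ℝ := μ / (4 * δ) with hνδdef
  set σ' : ℝ := ρ + νβ with hσ'def
  set κ' : ℝ := χ + νδ with hκ'def
  have hνβpos : 0 < νβ := by rw [hνβdef]; positivity
  have hνδpos : 0 < νδ := by rw [hνδdef]; positivity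
  have hσ'pos : 0 < σ' := by rw [hσ'def]; positivity
  have hκ'pos : 0 < κ' := by rw [hκ'def]; positivity
  have hχκ' : χ ≤ κ' := by rw [hκ'def]; linarith
  have hμβ : μ = 4 * β * νβ := by rw [hνβdef]; field_simp
  have hμδ : μ = 4 * δ * νδ := by rw [hνδdef]; field_simp
  have hα1 : α * σ' ≤ μ * ρ := by
    have h : α ≤ μ * ρ / σ' := by rw [hαdef]; exact min_le_left _ _
    calc α * σ' ≤ (μ * ρ / σ') * σ' := mul_le_mul_of_nonneg_right h hσ'pos.le
      _ = μ * ρ := by field_simp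
  have hα2 : α * κ' ≤ μ * χ := by
    have h : α ≤ μ * χ / κ' := by rw [hαdef]; exact min_le_right _ _
    calc α * κ' ≤ (μ * χ / κ') * κ' := mul_le_mul_of_nonneg_right h hκ'pos.le
      _ = μ * χ := by field_simp
  have hαpos : 0 < α := by
    rw [hαdef]
    apply lt_min
    · exact div_pos (by positivity) hσ'pos
    · exact div_pos (by positivity) hκ'pos
  have h1α : (0:ℝ) < 1 + α := by linarith
  have h2α : (0:ℝ) < 2 + α := by linarith
  have hθpos : 0 < θ := lt_trans (by positivity) hθl
  have hθα : 1 < θ * (1 + α) := by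
    have h := (div_lt_iff₀ h1α).mp hθl
    linarith
  have hωpos : 0 < ω := by rw [hωdef]; positivity
  have hω2α : ω * (2 + α) = 1 + θ := by
    rw [hωdef]; field_simp
  have hωθ : ω < θ := by
    have h : ω * (2 + α) < θ * (2 + α) := by nlinarith [hθα, hω2α]
    exact (mul_lt_mul_iff_left₀ h2α).mp h
  have hω1 : ω ≤ 1 := by
    have h : ω * (2 + α) ≤ 1 * (2 + α) := by nlinarith [hω2α, hθu]
    exact (mul_le_mul_iff_left₀ h2α).mp h
  have hω1α : ω * (1 + α) = 1 + θ - ω := by nlinarith [hω2α]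
  have hωge : 1 / (1 + α) ≤ ω := by
    rw [div_le_iff₀ h1α]
    nlinarith [hω2α, hθα, hωθ, hθpos]
  refine ⟨⟨hωge, hωθ⟩, ?_⟩
  intro xhat uhat hTx huV hsA hsB
  have hτpos : 0 < τ := by rw [hτdef]; positivity
  have hγpos : 0 < γ := by rw [hγdef]; positivity
  have hτinv : μ * τ⁻¹ = 2 * σ' := by
    have hden : (0:ℝ) < μ + 4 * β * ρ := by positivity
    rw [hτdef, hσ'def, hνβdef, inv_div]
    field_simp
    ring
  have hγinv : μ * γ⁻¹ = 2 * κ' := by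
    have hden : (0:ℝ) < μ + 4 * δ * χ := by positivity
    rw [hγdef, hκ'def, hνδdef, inv_div]
    field_simp
    ring
  -- T is (quasi)-nonexpansive towards xhat
  have hT' : ∀ n, ‖x (n+1) - xhat‖ ^ 2 ≤ ‖p (n+1) - xhat‖ ^ 2 := by
    intro n
    have h := hT (p (n+1)) xhat hTx
    have h2 : 0 ≤ (1 - a) / a * ‖p (n+1) - T (p (n+1))‖ ^ 2 :=
      mul_nonneg (div_nonneg (by linarith) ha0.le) (sq_nonneg _)
    rw [halg4 n]
    linarith
  -- projection facts
  have hprojU : ∀ n, ‖u (n+1) - uhat‖ ^ 2 ≤ ‖η (n+1) - uhat‖ ^ 2 := by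
    intro n
    rw [halg2 n]
    exact proj_sq_le V _ _ huV
  have hprojUU : ∀ n, ‖u (n+2) - u (n+1)‖ ^ 2 ≤ ‖η (n+2) - u (n+1)‖ ^ 2 := by
    intro n
    rw [halg2 (n+1)]
    refine proj_sq_le V _ _ ?_
    rw [halg2 n]
    exact (V.orthogonalProjection (η (n+1))).2
  -- A-side resolvent inequality
  have hAineq : ∀ n, μ * ρ * ‖p (n+1) - xhat‖ ^ 2 + σ' * ‖p (n+1) - xhat‖ ^ 2
      + ρ * ‖p (n+1) - x n‖ ^ 2
      ≤ σ' * ‖x n - xhat‖ ^ 2 - μ * ⟪L (p (n+1) - xhat), u (n+1) - uhat⟫ := by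
    intro n
    have hmono := hA (p (n+1)) xhat _ _ (halg3 n) hsA
    have harg : (τ⁻¹ • (x n - p (n+1)) - (ContinuousLinearMap.adjoint L) (u (n+1)) - C (x n))
        - (-(ContinuousLinearMap.adjoint L) uhat - C xhat)
        = τ⁻¹ • (x n - p (n+1)) - (ContinuousLinearMap.adjoint L) (u (n+1) - uhat)
          - (C (x n) - C xhat) := by
      rw [map_sub]; abel
    rw [harg, inner_sub_right, inner_sub_right, real_inner_smul_right,
      ContinuousLinearMap.adjoint_inner_right] at hmono
    have hid := inner_three (p (n+1)) (x n) xhat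
    -- C-coercivity bound
    have hsplit : ⟪p (n+1) - xhat, C (x n) - C xhat⟫
        = ⟪x n - xhat, C (x n) - C xhat⟫ + ⟪p (n+1) - x n, C (x n) - C xhat⟫ := by
      rw [← inner_add_left]
      congr 1
      abel
    have h1 : β * ‖C (x n) - C xhat‖ ^ 2 ≤ ⟪x n - xhat, C (x n) - C xhat⟫ := by
      have h := hC (x n) xhat
      rwa [real_inner_comm] at h
    have h2 : -(‖p (n+1) - x n‖ * ‖C (x n) - C xhat‖) ≤ ⟪p (n+1) - x n, C (x n) - C xhat⟫ :=
      (abs_le.mp (abs_real_inner_le_norm _ _)).1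
    have h3 : β * ‖C (x n) - C xhat‖ ^ 2 - ‖p (n+1) - x n‖ * ‖C (x n) - C xhat‖
        ≤ ⟪p (n+1) - xhat, C (x n) - C xhat⟫ := by
      rw [hsplit]; linarith
    have h4 := mul_le_mul_of_nonneg_left h3 hμpos.le
    have hCb : -(νβ * ‖p (n+1) - x n‖ ^ 2) ≤ μ * ⟪p (n+1) - xhat, C (x n) - C xhat⟫ := by
      have hkey : μ * (β * ‖C (x n) - C xhat‖ ^ 2 - ‖p (n+1) - x n‖ * ‖C (x n) - C xhat‖)
          + νβ * ‖p (n+1) - x n‖ ^ 2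
          = νβ * (2 * β * ‖C (x n) - C xhat‖ - ‖p (n+1) - x n‖) ^ 2 := by
        rw [hμβ]; ring
      linarith only [h4, hkey, mul_nonneg hνβpos.le
        (sq_nonneg (2 * β * ‖C (x n) - C xhat‖ - ‖p (n+1) - x n‖))]
    -- multiply hmono by μ and assemble
    have hm := mul_le_mul_of_nonneg_left hmono hμpos.le
    have e1 : μ * (τ⁻¹ * ⟪p (n+1) - xhat, x n - p (n+1)⟫
          - ⟪L (p (n+1) - xhat), u (n+1) - uhat⟫
          - ⟪p (n+1) - xhat, C (x n) - C xhat⟫)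
        = σ' * (2 * ⟪p (n+1) - xhat, x n - p (n+1)⟫)
          - μ * ⟪L (p (n+1) - xhat), u (n+1) - uhat⟫
          - μ * ⟪p (n+1) - xhat, C (x n) - C xhat⟫ := by
      rw [show μ * (τ⁻¹ * ⟪p (n+1) - xhat, x n - p (n+1)⟫
          - ⟪L (p (n+1) - xhat), u (n+1) - uhat⟫
          - ⟪p (n+1) - xhat, C (x n) - C xhat⟫)
        = (μ * τ⁻¹) * ⟪p (n+1) - xhat, x n - p (n+1)⟫
          - μ * ⟪L (p (n+1) - xhat), u (n+1) - uhat⟫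
          - μ * ⟪p (n+1) - xhat, C (x n) - C xhat⟫ from by ring, hτinv]
      ring
    rw [e1] at hm
    rw [hid] at hm
    have hσ'ρ2 : νβ * ‖p (n+1) - x n‖ ^ 2
        = σ' * ‖p (n+1) - x n‖ ^ 2 - ρ * ‖p (n+1) - x n‖ ^ 2 := by
      rw [hσ'def]; ring
    linarith only [hm, hCb, hσ'ρ2]
  -- B-side resolvent inequality
  have hBineq : ∀ n, μ * χ * ‖η (n+1) - uhat‖ ^ 2 + κ' * ‖η (n+1) - uhat‖ ^ 2
      + χ * ‖η (n+1) - u n‖ ^ 2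
      ≤ κ' * ‖u n - uhat‖ ^ 2 + μ * ⟪L (xb n - xhat), u (n+1) - uhat⟫ := by
    intro n
    have hmono := hB (η (n+1)) uhat _ _ (halg1 n) hsB
    have harg : (γ⁻¹ • (u n - η (n+1)) + L (xb n) - D (u n)) - (L xhat - D uhat)
        = γ⁻¹ • (u n - η (n+1)) + L (xb n - xhat) - (D (u n) - D uhat) := by
      rw [map_sub]; abel
    rw [harg, inner_sub_right, inner_add_right, real_inner_smul_right] at hmono
    have hproj0 : ⟪η (n+1) - uhat, L (xb n - xhat)⟫
        = ⟪L (xb n - xhat), u (n+1) - uhat⟫ := by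
      have hmem : L (xb n - xhat) ∈ V := hran _
      have hz : ⟪η (n+1) - u (n+1), L (xb n - xhat)⟫ = 0 := by
        rw [halg2 n]
        exact V.starProjection_inner_eq_zero (η (n+1)) _ hmem
      calc ⟪η (n+1) - uhat, L (xb n - xhat)⟫
          = ⟪η (n+1) - u (n+1), L (xb n - xhat)⟫
            + ⟪u (n+1) - uhat, L (xb n - xhat)⟫ := by
            rw [← inner_add_left]
            congr 1
            abel
        _ = ⟪u (n+1) - uhat, L (xb n - xhat)⟫ := by rw [hz, zero_add]
        _ = ⟪L (xb n - xhat), u (n+1) - uhat⟫ := real_inner_comm _ _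
    rw [hproj0] at hmono
    have hid := inner_three (η (n+1)) (u n) uhat
    -- D-coercivity bound
    have hsplit : ⟪η (n+1) - uhat, D (u n) - D uhat⟫
        = ⟪u n - uhat, D (u n) - D uhat⟫ + ⟪η (n+1) - u n, D (u n) - D uhat⟫ := by
      rw [← inner_add_left]
      congr 1
      abel
    have h1 : δ * ‖D (u n) - D uhat‖ ^ 2 ≤ ⟪u n - uhat, D (u n) - D uhat⟫ := by
      have h := hD (u n) uhat
      rwa [real_inner_comm] at h
    have h2 : -(‖η (n+1) - u n‖ * ‖D (u n) - D uhat‖) ≤ ⟪η (n+1) - u n, D (u n) - D uhat⟫ :=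
      (abs_le.mp (abs_real_inner_le_norm _ _)).1
    have h3 : δ * ‖D (u n) - D uhat‖ ^ 2 - ‖η (n+1) - u n‖ * ‖D (u n) - D uhat‖
        ≤ ⟪η (n+1) - uhat, D (u n) - D uhat⟫ := by
      rw [hsplit]; linarith
    have h4 := mul_le_mul_of_nonneg_left h3 hμpos.le
    have hDb : -(νδ * ‖η (n+1) - u n‖ ^ 2) ≤ μ * ⟪η (n+1) - uhat, D (u n) - D uhat⟫ := by
      have hkey : μ * (δ * ‖D (u n) - D uhat‖ ^ 2 - ‖η (n+1) - u n‖ * ‖D (u n) - D uhat‖)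
          + νδ * ‖η (n+1) - u n‖ ^ 2
          = νδ * (2 * δ * ‖D (u n) - D uhat‖ - ‖η (n+1) - u n‖) ^ 2 := by
        rw [hμδ]; ring
      linarith only [h4, hkey, mul_nonneg hνδpos.le
        (sq_nonneg (2 * δ * ‖D (u n) - D uhat‖ - ‖η (n+1) - u n‖))]
    have hm := mul_le_mul_of_nonneg_left hmono hμpos.le
    have e1 : μ * (γ⁻¹ * ⟪η (n+1) - uhat, u n - η (n+1)⟫
          + ⟪L (xb n - xhat), u (n+1) - uhat⟫
          - ⟪η (n+1) - uhat, D (u n) - D uhat⟫)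
        = κ' * (2 * ⟪η (n+1) - uhat, u n - η (n+1)⟫)
          + μ * ⟪L (xb n - xhat), u (n+1) - uhat⟫
          - μ * ⟪η (n+1) - uhat, D (u n) - D uhat⟫ := by
      rw [show μ * (γ⁻¹ * ⟪η (n+1) - uhat, u n - η (n+1)⟫
          + ⟪L (xb n - xhat), u (n+1) - uhat⟫
          - ⟪η (n+1) - uhat, D (u n) - D uhat⟫)
        = (μ * γ⁻¹) * ⟪η (n+1) - uhat, u n - η (n+1)⟫
          + μ * ⟪L (xb n - xhat), u (n+1) - uhat⟫
          - μ * ⟪η (n+1) - uhat, D (u n) - D uhat⟫ from by ring, hγinv]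
      ring
    rw [e1] at hm
    rw [hid] at hm
    have hκ'χ2 : νδ * ‖η (n+1) - u n‖ ^ 2
        = κ' * ‖η (n+1) - u n‖ ^ 2 - χ * ‖η (n+1) - u n‖ ^ 2 := by
      rw [hκ'def]; ring
    linarith only [hm, hDb, hκ'χ2]
  -- the master per-step inequality
  have hDiamond : ∀ (n : ℕ) (w : H), xb n = x n + θ • w →
      μ * ρ * ‖p (n+1) - xhat‖ ^ 2 + σ' * ‖p (n+1) - xhat‖ ^ 2
        + μ * χ * ‖η (n+1) - uhat‖ ^ 2 + κ' * ‖η (n+1) - uhat‖ ^ 2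
        + χ * ‖η (n+1) - u n‖ ^ 2 + ρ * ‖p (n+1) - x n‖ ^ 2
        + μ * ⟪L (p (n+1) - x n), u (n+1) - uhat⟫
      ≤ σ' * ‖x n - xhat‖ ^ 2 + κ' * ‖u n - uhat‖ ^ 2
        + θ * (μ * ⟪L w, u (n+1) - uhat⟫) := by
    intro n w hw
    have hcross : ⟪L (xb n - xhat), u (n+1) - uhat⟫
        - ⟪L (p (n+1) - xhat), u (n+1) - uhat⟫
        = θ * ⟪L w, u (n+1) - uhat⟫ - ⟪L (p (n+1) - x n), u (n+1) - uhat⟫ := by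
      have hv : L (xb n - xhat) - L (p (n+1) - xhat)
          = θ • L w - L (p (n+1) - x n) := by
        rw [← map_smul, ← map_sub, ← map_sub]
        congr 1
        rw [hw]
        module
      rw [← inner_sub_left, hv, inner_sub_left, real_inner_smul_left]
    have hcrossμ : μ * ⟪L (xb n - xhat), u (n+1) - uhat⟫
        = μ * ⟪L (p (n+1) - xhat), u (n+1) - uhat⟫
          + θ * (μ * ⟪L w, u (n+1) - uhat⟫)
          - μ * ⟪L (p (n+1) - x n), u (n+1) - uhat⟫ := by
      linear_combination μ * hcross
    have hAn := hAineq n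
    have hBn := hBineq n
    linarith only [hAn, hBn, hcrossμ.le, hcrossμ.ge]
  -- the cross-term pointwise lemma (scaled by ω)
  have hclub : ∀ (w : H) (z zp : G),
      ω * (θ * (μ * ⟪L w, zp⟫))
        ≤ ω * (ω * (μ * ⟪L w, z⟫)) + ω * (ω * (ρ * ‖w‖ ^ 2))
          + ω * (χ * ‖zp - z‖ ^ 2) + (θ - ω) * (κ' * ‖zp‖ ^ 2) := by
    intro w z zp
    have h0 : ω * (θ * (μ * ⟪L w, zp⟫)) - ω * (ω * (μ * ⟪L w, z⟫))
        = ω * (μ * ⟪L w, θ • zp - ω • z⟫) := by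
      rw [inner_sub_right, real_inner_smul_right, real_inner_smul_right]
      ring
    have hCS : ⟪L w, θ • zp - ω • z⟫ ≤ ‖L‖ * ‖w‖ * ‖θ • zp - ω • z‖ := by
      calc ⟪L w, θ • zp - ω • z⟫ ≤ ‖L w‖ * ‖θ • zp - ω • z‖ := real_inner_le_norm _ _
        _ ≤ ‖L‖ * ‖w‖ * ‖θ • zp - ω • z‖ :=
          mul_le_mul_of_nonneg_right (L.le_opNorm w) (norm_nonneg _)
    have hCS2 := mul_le_mul_of_nonneg_left hCS (by positivity : (0:ℝ) ≤ ω * μ)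
    have hYoung : (ω * μ) * (‖L‖ * ‖w‖ * ‖θ • zp - ω • z‖)
        ≤ ω * (ω * (ρ * ‖w‖ ^ 2)) + χ * ‖θ • zp - ω • z‖ ^ 2 := by
      have hkey : (4 * ρ) * (ω * (ω * (ρ * ‖w‖ ^ 2)) + χ * ‖θ • zp - ω • z‖ ^ 2
            - (ω * μ) * (‖L‖ * ‖w‖ * ‖θ • zp - ω • z‖))
          = (2 * ρ * ω * ‖w‖ - μ * ‖L‖ * ‖θ • zp - ω • z‖) ^ 2
            + (4 * (ρ * χ) - (μ * ‖L‖) ^ 2) * ‖θ • zp - ω • z‖ ^ 2 := by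
        ring
      have hzero : 4 * (ρ * χ) - (μ * ‖L‖) ^ 2 = 0 := by rw [hμL2]; ring
      nlinarith only [hkey, hzero, sq_nonneg (2 * ρ * ω * ‖w‖ - μ * ‖L‖ * ‖θ • zp - ω • z‖),
        sq_nonneg ‖θ • zp - ω • z‖, hρ]
    have hb2 : ‖θ • zp - ω • z‖ ^ 2
        = θ ^ 2 * ‖zp‖ ^ 2 - 2 * (θ * ω) * ⟪zp, z⟫ + ω ^ 2 * ‖z‖ ^ 2 := by
      rw [norm_sub_sq_real, real_inner_smul_left, real_inner_smul_right, norm_smul, norm_smul,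
        Real.norm_eq_abs, Real.norm_eq_abs, abs_of_pos hθpos, abs_of_pos hωpos]
      ring
    have hzz : ‖zp - z‖ ^ 2 = ‖zp‖ ^ 2 - 2 * ⟪zp, z⟫ + ‖z‖ ^ 2 := by
      rw [norm_sub_sq_real]
    have hPSD : χ * ‖θ • zp - ω • z‖ ^ 2
        ≤ ω * (χ * ‖zp - z‖ ^ 2) + (θ - ω) * (κ' * ‖zp‖ ^ 2) := by
      have hcert : θ * (ω * (χ * ‖zp - z‖ ^ 2) + (θ - ω) * (κ' * ‖zp‖ ^ 2)
            - χ * ‖θ • zp - ω • z‖ ^ 2)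
          = χ * (1 - θ) * (θ * ‖zp‖ - ω * ‖z‖) ^ 2 + χ * ω * (θ - ω) * ‖z‖ ^ 2
            + θ * (θ - ω) * (κ' - χ) * ‖zp‖ ^ 2
            + 2 * χ * θ * ω * (1 - θ) * (‖zp‖ * ‖z‖ - ⟪zp, z⟫) := by
        rw [hb2, hzz]; ring
      have t1 : (0:ℝ) ≤ χ * (1 - θ) * (θ * ‖zp‖ - ω * ‖z‖) ^ 2 :=
        mul_nonneg (mul_nonneg hχ.le (by linarith)) (sq_nonneg _)
      have t2 : (0:ℝ) ≤ χ * ω * (θ - ω) * ‖z‖ ^ 2 :=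
        mul_nonneg (mul_nonneg (mul_nonneg hχ.le hωpos.le) (by linarith)) (sq_nonneg _)
      have t3 : (0:ℝ) ≤ θ * (θ - ω) * (κ' - χ) * ‖zp‖ ^ 2 :=
        mul_nonneg (mul_nonneg (mul_nonneg hθpos.le (by linarith)) (by linarith)) (sq_nonneg _)
      have t4 : (0:ℝ) ≤ 2 * χ * θ * ω * (1 - θ) * (‖zp‖ * ‖z‖ - ⟪zp, z⟫) := by
        have := real_inner_le_norm zp z
        have h5 : (0:ℝ) ≤ 2 * χ * θ * ω * (1 - θ) :=
          mul_nonneg (by positivity) (by linarith)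
        exact mul_nonneg h5 (by linarith)
      nlinarith only [hcert, t1, t2, t3, t4, hθpos]
    linarith only [h0.le, h0.ge, hCS2, hYoung, hPSD]
  -- lower bound lemma for S + E
  have hSE : ∀ (w : H) (z : G), -(χ * ‖z‖ ^ 2) ≤ ρ * ‖w‖ ^ 2 + μ * ⟪L w, z⟫ := by
    intro w z
    have h1 : -(‖L w‖ * ‖z‖) ≤ ⟪L w, z⟫ := (abs_le.mp (abs_real_inner_le_norm _ _)).1
    have h2 : -(‖L‖ * ‖w‖ * ‖z‖) ≤ -(‖L w‖ * ‖z‖) := by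
      have := mul_le_mul_of_nonneg_right (L.le_opNorm w) (norm_nonneg z)
      linarith
    have h3 : -(‖L‖ * ‖w‖ * ‖z‖) ≤ ⟪L w, z⟫ := le_trans h2 h1
    have h4 := mul_le_mul_of_nonneg_left h3 hμpos.le
    have hzero : 4 * (ρ * χ) - (μ * ‖L‖) ^ 2 = 0 := by rw [hμL2]; ring
    have hkey : (4 * ρ) * (ρ * ‖w‖ ^ 2 - μ * (‖L‖ * ‖w‖ * ‖z‖) + χ * ‖z‖ ^ 2)
        = (2 * ρ * ‖w‖ - μ * ‖L‖ * ‖z‖) ^ 2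
          + (4 * (ρ * χ) - (μ * ‖L‖) ^ 2) * ‖z‖ ^ 2 := by ring
    have hE : (0:ℝ) ≤ ρ * ‖w‖ ^ 2 - μ * (‖L‖ * ‖w‖ * ‖z‖) + χ * ‖z‖ ^ 2 := by
      nlinarith only [hkey, hzero, sq_nonneg (2 * ρ * ‖w‖ - μ * ‖L‖ * ‖z‖), hρ]
    linarith only [h4, hE]
  -- the Lyapunov function
  set Ψ : ℕ → ℝ := fun n =>
    ω * ((1 + α) * (σ' * ‖x (n+1) - xhat‖ ^ 2)) + κ' * ‖u (n+1) - uhat‖ ^ 2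
      + ω * (ρ * ‖p (n+1) - x n‖ ^ 2)
      + ω * (μ * ⟪L (p (n+1) - x n), u (n+1) - uhat⟫) with hΨdef
  -- auxiliary scaled bounds
  have eX : ∀ n, ω * ((1 + α) * (σ' * ‖x (n+1) - xhat‖ ^ 2))
      ≤ ω * ((μ * ρ + σ') * ‖p (n+1) - xhat‖ ^ 2) := by
    intro n
    have h1 : (1 + α) * σ' ≤ μ * ρ + σ' := by linarith [hα1]
    have h2 := hT' n
    have h3 : (1 + α) * σ' * ‖x (n+1) - xhat‖ ^ 2 ≤ (μ * ρ + σ') * ‖p (n+1) - xhat‖ ^ 2 :=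
      mul_le_mul h1 h2 (sq_nonneg _) (by positivity)
    have h4 := mul_le_mul_of_nonneg_left h3 hωpos.le
    linarith only [h4]
  have eU : ∀ n, κ' * ‖u (n+1) - uhat‖ ^ 2 + (θ - ω) * (κ' * ‖u (n+1) - uhat‖ ^ 2)
      ≤ ω * ((μ * χ + κ') * ‖η (n+1) - uhat‖ ^ 2) := by
    intro n
    have h1 : (1 + θ - ω) * κ' ≤ ω * (μ * χ + κ') := by
      have h2 := mul_le_mul_of_nonneg_left hα2 hωpos.le
      have h1b : (1 + θ - ω) * κ' = ω * (1 + α) * κ' := by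
        rw [hω1α]
      linarith only [h2, h1b]
    have h2 := hprojU n
    have h3 : (1 + θ - ω) * κ' * ‖u (n+1) - uhat‖ ^ 2
        ≤ ω * (μ * χ + κ') * ‖η (n+1) - uhat‖ ^ 2 :=
      mul_le_mul h1 h2 (sq_nonneg _) (by positivity)
    linarith only [h3]
  have eUw : ∀ n, κ' * ‖u (n+1) - uhat‖ ^ 2
      ≤ ω * ((μ * χ + κ') * ‖η (n+1) - uhat‖ ^ 2) := by
    intro n
    have h := eU n
    linarith only [h, mul_nonneg (by linarith only [hωθ] : (0:ℝ) ≤ θ - ω)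
      (mul_nonneg hκ'pos.le (sq_nonneg ‖u (n+1) - uhat‖))]
  -- base case
  have hΨ0 : Ψ 0 ≤ ω * (σ' * ‖x 0 - xhat‖ ^ 2 + κ' * ‖u 0 - uhat‖ ^ 2) := by
    have hw0 : xb 0 = x 0 + θ • (0 : H) := by rw [hxb0]; simp
    have hD0 := hDiamond 0 0 hw0
    have hz : ⟪L (0 : H), u 1 - uhat⟫ = 0 := by
      rw [map_zero, inner_zero_left]
    rw [hz] at hD0
    have hD0ω := mul_le_mul_of_nonneg_left hD0 hωpos.le
    have hnn : (0:ℝ) ≤ ω * (χ * ‖η 1 - u 0‖ ^ 2) := by positivity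
    have hx := eX 0
    have hu := eUw 0
    simp only [hΨdef]
    linarith only [hD0ω, hx, hu, hnn]
  -- induction step
  have hΨstep : ∀ n, Ψ (n+1) ≤ ω * Ψ n := by
    intro n
    have hD := hDiamond (n+1) (p (n+1) - x n) (halg5 n)
    have hDω := mul_le_mul_of_nonneg_left hD hωpos.le
    have hcl := hclub (p (n+1) - x n) (u (n+1) - uhat) (u (n+2) - uhat)
    have hzz : u (n+2) - uhat - (u (n+1) - uhat) = u (n+2) - u (n+1) := by abel
    rw [hzz] at hcl
    have hx := eX (n+1)
    have hu := eU (n+1)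
    have e3 : ω * (χ * ‖u (n+2) - u (n+1)‖ ^ 2) ≤ ω * (χ * ‖η (n+2) - u (n+1)‖ ^ 2) := by
      have h := hprojUU n
      have h2 := mul_le_mul_of_nonneg_left (mul_le_mul_of_nonneg_left h hχ.le) hωpos.le
      linarith only [h2]
    have e4 : ω * (σ' * ‖x (n+1) - xhat‖ ^ 2)
        ≤ ω * (ω * ((1 + α) * (σ' * ‖x (n+1) - xhat‖ ^ 2))) := by
      have h1 : (0:ℝ) ≤ ω * (θ - ω) := mul_nonneg hωpos.le (by linarith [hωθ])
      have hk : ω * (ω * ((1 + α) * (σ' * ‖x (n+1) - xhat‖ ^ 2)))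
          - ω * (σ' * ‖x (n+1) - xhat‖ ^ 2)
          = ω * (θ - ω) * (σ' * ‖x (n+1) - xhat‖ ^ 2) := by
        linear_combination (ω * σ' * ‖x (n+1) - xhat‖ ^ 2) * hω1α
      linarith only [hk, mul_nonneg h1 (mul_nonneg hσ'pos.le (sq_nonneg ‖x (n+1) - xhat‖))]
    simp only [hΨdef]
    linarith only [hDω, hcl, hx, hu, e3, e4]
  -- global decay
  have hΨglob : ∀ n, Ψ n ≤ ω ^ (n+1) * (σ' * ‖x 0 - xhat‖ ^ 2 + κ' * ‖u 0 - uhat‖ ^ 2) := by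
    intro n
    induction n with
    | zero => simpa [pow_one] using hΨ0
    | succ m ih =>
      calc Ψ (m+1) ≤ ω * Ψ m := hΨstep m
        _ ≤ ω * (ω ^ (m+1) * (σ' * ‖x 0 - xhat‖ ^ 2 + κ' * ‖u 0 - uhat‖ ^ 2)) :=
          mul_le_mul_of_nonneg_left ih hωpos.le
        _ = ω ^ (m+2) * (σ' * ‖x 0 - xhat‖ ^ 2 + κ' * ‖u 0 - uhat‖ ^ 2) := by ring
  -- extraction
  have hfin : ∀ n, (κ' - ω * χ) * ‖u (n+1) - uhat‖ ^ 2 + σ' * ‖x (n+1) - xhat‖ ^ 2 ≤ Ψ n := by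
    intro n
    have h1 := hSE (p (n+1) - x n) (u (n+1) - uhat)
    have h2 := mul_le_mul_of_nonneg_left h1 hωpos.le
    have h3 : σ' * ‖x (n+1) - xhat‖ ^ 2
        ≤ ω * ((1 + α) * (σ' * ‖x (n+1) - xhat‖ ^ 2)) := by
      have hk : ω * ((1 + α) * (σ' * ‖x (n+1) - xhat‖ ^ 2))
          - σ' * ‖x (n+1) - xhat‖ ^ 2
          = (θ - ω) * (σ' * ‖x (n+1) - xhat‖ ^ 2) := by
        linear_combination (σ' * ‖x (n+1) - xhat‖ ^ 2) * hω1α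
      linarith only [hk, mul_nonneg (by linarith only [hωθ] : (0:ℝ) ≤ θ - ω)
        (mul_nonneg hσ'pos.le (sq_nonneg ‖x (n+1) - xhat‖))]
    simp only [hΨdef]
    linarith only [h2, h3]
  -- conclusion
  intro k
  have hcoeff : χ * (1 - ω) + νδ = κ' - ω * χ := by rw [hκ'def]; ring
  cases k with
  | zero =>
    simp only [pow_zero, one_mul]
    have h1 : (0:ℝ) ≤ ω * χ * ‖u 0 - uhat‖ ^ 2 := by positivity
    rw [hκ'def]
    linarith only [h1]
  | succ m =>
    have h1 := hfin m
    have h2 := hΨglob m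
    rw [hcoeff]
    calc (κ' - ω * χ) * ‖u (m+1) - uhat‖ ^ 2 + σ' * ‖x (m+1) - xhat‖ ^ 2
        ≤ Ψ m := h1
      _ ≤ ω ^ (m+1) * (σ' * ‖x 0 - xhat‖ ^ 2 + κ' * ‖u 0 - uhat‖ ^ 2) := h2
      _ = ω ^ (m+1) * (κ' * ‖u 0 - uhat‖ ^ 2 + σ' * ‖x 0 - xhat‖ ^ 2) := by ring
end

section
/- Let f : ℝ^N → ℝ be convex, let R be an m×N real matrix with R Rᵀ invertible, S an n×N real matrix, c ∈ ℝ^m, d ∈ ℝ^n; let L : ℝ^N → ℝ^{m+n} be x ↦ (Rx, Sx) and b = (c,d). Let γ > 0 and τ > 0 satisfy γτ‖L‖² < 1. Assume there exists a pair (x̂₀, û₀) with R x̂₀ = c, S x̂₀ = d such that x̂₀ minimizes z ↦ f(z) + ⟨û₀, Lz⟩ over ℝ^N. Given x⁰ = x̄⁰ ∈ ℝ^N and u⁰ ∈ ℝ^{m+n}, define for every k ∈ ℕ: u^{k+1} = u^k + γ(L x̄^k − b); p^{k+1} = the unique minimizer over z ∈ ℝ^N of f(z) + ‖z − (x^k −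 τ L* u^{k+1})‖²/(2τ); x^{k+1} = p^{k+1} − Rᵀ(R Rᵀ)^{-1}(R p^{k+1} − c); x̄^{k+1} = x^{k+1} + p^{k+1} − x^k. Then there exist x̂ ∈ ℝ^N minimizing f over {x : Rx = c, Sx = d} and an associated multiplier û ∈ ℝ^{m+n} (i.e., x̂ minimizes z ↦ f(z) + ⟨û, Lz − b⟩ over ℝ^N) such that x^k → x̂ and u^k → û. -/
open RealInnerProductSpace Filter Topology


section aux
variable {E F : Type*} [NormedAddCommGroup E] [InnerProductSpace ℝ E]
  [NormedAddCommGroup F] [InnerProductSpace ℝ F]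

lemma aux_prox_vi (f : E → ℝ) (hf : ConvexOn ℝ Set.univ f) {τ : ℝ} (hτ : 0 < τ) (w q : E)
    (h : ∀ z, f q + ‖q - w‖ ^ 2 / (2 * τ) ≤ f z + ‖z - w‖ ^ 2 / (2 * τ)) (z : E) :
    ⟪w - q, z - q⟫ ≤ τ * (f z - f q) := by
  have h2τ : (0:ℝ) < 2 * τ := by linarith
  have H : ∀ z', 2 * τ * f q + ‖q - w‖ ^ 2 ≤ 2 * τ * f z' + ‖z' - w‖ ^ 2 := by
    intro z'
    have h' := h z'
    have := mul_le_mul_of_nonneg_left h' h2τ.le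
    rw [mul_add, mul_add, mul_div_cancel₀ _ (ne_of_gt h2τ), mul_div_cancel₀ _ (ne_of_gt h2τ)]
      at this
    linarith
  have key : ∀ t : ℝ, 0 < t → t ≤ 1 →
      ⟪w - q, z - q⟫ ≤ τ * (f z - f q) + t * (‖z - q‖ ^ 2 / 2) := by
    intro t ht0 ht1
    have hconv : f (q + t • (z - q)) ≤ f q + t * (f z - f q) := by
      have h2 := hf.2 (Set.mem_univ q) (Set.mem_univ z)
        (by linarith : (0:ℝ) ≤ 1 - t) ht0.le (by ring)
      have he : q + t • (z - q) = (1 - t) • q + t • z := by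
        rw [smul_sub, sub_smul, one_smul]; abel
      rw [he]; simp only [smul_eq_mul] at h2; linarith
    have hnorm : ‖(q + t • (z - q)) - w‖ ^ 2
        = ‖q - w‖ ^ 2 + 2 * t * ⟪q - w, z - q⟫ + t ^ 2 * ‖z - q‖ ^ 2 := by
      have he : (q + t • (z - q)) - w = (q - w) + t • (z - q) := by abel
      rw [he, norm_add_sq_real, real_inner_smul_right, norm_smul]
      simp only [Real.norm_eq_abs, mul_pow, sq_abs]
      ring
    have hH := H (q + t • (z - q))
    have hconv' := mul_le_mul_of_nonneg_left hconv (by linarith : (0:ℝ) ≤ 2 * τ)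
    have ineq0 : 0 ≤ 2 * τ * (t * (f z - f q)) + 2 * t * ⟪q - w, z - q⟫
        + t ^ 2 * ‖z - q‖ ^ 2 := by
      rw [hnorm] at hH; linarith
    have ineq1 : 0 ≤ (2 * t) * (τ * (f z - f q) + ⟪q - w, z - q⟫ + t * (‖z - q‖ ^ 2 / 2)) := by
      ring_nf; ring_nf at ineq0; linarith
    have ineq2 : 0 ≤ τ * (f z - f q) + ⟪q - w, z - q⟫ + t * (‖z - q‖ ^ 2 / 2) :=
      nonneg_of_mul_nonneg_right ineq1 (by linarith)
    have einner : ⟪q - w, z - q⟫ = -⟪w - q, z - q⟫ := by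
      have : q - w = -(w - q) := by abel
      rw [this, inner_neg_left]
    rw [einner] at ineq2; linarith
  by_contra hlt
  push_neg at hlt
  set C := ‖z - q‖ ^ 2 / 2 with hCdef
  have hC : 0 ≤ C := by positivity
  set ε := ⟪w - q, z - q⟫ - τ * (f z - f q) with hε
  have hεpos : 0 < ε := by simp only [hε]; linarith
  have ht0 : 0 < min 1 (ε / (2 * (C + 1))) := lt_min one_pos (by positivity)
  have hk := key _ ht0 (min_le_left _ _)
  have h1 : min 1 (ε / (2 * (C + 1))) * C ≤ (ε / (2 * (C + 1))) * C :=
    mul_le_mul_of_nonneg_right (min_le_right _ _) hC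
  have h2 : (ε / (2 * (C + 1))) * C < ε := by
    rw [div_mul_eq_mul_div, div_lt_iff₀ (by positivity)]
    nlinarith
  linarith

lemma aux_step (L : E →L[ℝ] F) {τ γ ρ : ℝ} (hτ : 0 < τ) (hγ : 0 < γ)
    (hcs : ∀ (v : F) (w : E), 2 * τ * γ * ⟪v, L w⟫ ≤ ρ * (τ * ‖v‖ ^ 2 + γ * ‖w‖ ^ 2))
    (X P X' q xh : E) (U U' uh : F)
    (h1 : ⟪X - P, xh - P⟫ ≤ τ * ⟪uh - U', L (P - xh)⟫)
    (h2 : U' - U = γ • L (X + q - xh))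
    (h3 : ‖P - xh‖ ^ 2 = ‖P - X'‖ ^ 2 + ‖X' - xh‖ ^ 2) :
    γ * ‖X' - xh‖ ^ 2 + τ * ‖U' - uh‖ ^ 2 + 2 * τ * γ * ⟪U' - uh, L (P - X)⟫
      + γ * ‖P - X‖ ^ 2
      + (1 - ρ) * γ * ‖q‖ ^ 2 + γ * ‖P - X'‖ ^ 2 + (1 - ρ) * τ * ‖U' - U‖ ^ 2
    ≤ γ * ‖X - xh‖ ^ 2 + τ * ‖U - uh‖ ^ 2 + 2 * τ * γ * ⟪U - uh, L q⟫ + γ * ‖q‖ ^ 2 := by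
  -- abbreviations for cross terms
  set a := ⟪U' - uh, L (P - xh)⟫ with ha
  set cq := ⟪U' - uh, L q⟫ with hcq
  set cpx := ⟪U' - uh, L (P - X)⟫ with hcpx
  -- expansion e1
  have e1 : ‖X - xh‖ ^ 2 = ‖X - P‖ ^ 2 - 2 * ⟪X - P, xh - P⟫ + ‖xh - P‖ ^ 2 := by
    have he : X - xh = (X - P) - (xh - P) := by abel
    rw [he, norm_sub_sq_real]
  have e1' : ‖xh - P‖ = ‖P - xh‖ := norm_sub_rev _ _
  -- expansion e2
  have e2 : ‖U - uh‖ ^ 2 = ‖U' - U‖ ^ 2 - 2 * ⟪U' - U, U' - uh⟫ + ‖U' - uh‖ ^ 2 := by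
    have he : U - uh = -((U' - U) - (U' - uh)) := by abel
    rw [he, norm_neg, norm_sub_sq_real]
  -- e3 : dual update inner product
  have e3 : ⟪U' - U, U' - uh⟫ = γ * (a + cq - cpx) := by
    rw [h2, real_inner_smul_left]
    have he : X + q - xh = (P - xh) + q - (P - X) := by abel
    rw [he]
    have : L ((P - xh) + q - (P - X)) = L (P - xh) + L q - L (P - X) := by
      rw [map_sub, map_add]
    rw [this]
    rw [inner_sub_left, inner_add_left]
    rw [real_inner_comm (U' - uh) (L (P - xh)), real_inner_comm (U' - uh) (L q),
      real_inner_comm (U' - uh) (L (P - X))]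
  -- e5 : split cq
  have e5 : cq = ⟪U - uh, L q⟫ + ⟪U' - U, L q⟫ := by
    rw [hcq]
    have he : U' - uh = (U - uh) + (U' - U) := by abel
    rw [he, inner_add_left]
  have e6 := hcs (U' - U) q
  -- h1 rewritten
  have e7 : ⟪uh - U', L (P - xh)⟫ = -a := by
    rw [ha]
    have : uh - U' = -(U' - uh) := by abel
    rw [this, inner_neg_left]
  rw [e7] at h1
  have h1' : 2 * γ * (⟪X - P, xh - P⟫ + τ * a) ≤ 0 := by
    apply mul_nonpos_of_nonneg_of_nonpos (by linarith)
    linarith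
  have E1' : γ * ‖X - xh‖ ^ 2
      = γ * ‖X - P‖ ^ 2 - 2 * γ * ⟪X - P, xh - P⟫ + γ * ‖P - xh‖ ^ 2 := by
    rw [e1, e1']; ring
  have E2' : τ * ‖U - uh‖ ^ 2
      = τ * ‖U' - U‖ ^ 2 - 2 * τ * γ * (a + cq - cpx) + τ * ‖U' - uh‖ ^ 2 := by
    rw [e2, e3]; ring
  have h3' : γ * ‖P - xh‖ ^ 2 = γ * ‖P - X'‖ ^ 2 + γ * ‖X' - xh‖ ^ 2 := by rw [h3]; ring
  have E5' : 2 * τ * γ * cq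
      = 2 * τ * γ * ⟪U - uh, L q⟫ + 2 * τ * γ * ⟪U' - U, L q⟫ := by rw [e5]; ring
  have e8 : ‖P - X‖ ^ 2 = ‖X - P‖ ^ 2 := by rw [norm_sub_rev]
  nlinarith [h1', E1', E2', h3', E5', e6, e8]

end aux

lemma aux_inner_mulVec {m N : ℕ} (R : Matrix (Fin m) (Fin N) ℝ) (y : Fin m → ℝ)
    (w : EuclideanSpace ℝ (Fin N)) :
    ⟪((WithLp.equiv 2 _).symm (R.transpose.mulVec y) : EuclideanSpace ℝ (Fin N)), w⟫
      = dotProduct y (R.mulVec w) := by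
  simp only [PiLp.inner_apply, RCLike.inner_apply, conj_trivial, WithLp.equiv_symm_apply, PiLp.toLp_apply,
    Matrix.mulVec, dotProduct, Matrix.transpose_apply, Finset.sum_mul, Finset.mul_sum]
  rw [Finset.sum_comm]
  apply Finset.sum_congr rfl; intros; apply Finset.sum_congr rfl; intros; ring

example {m N : ℕ} (R : Matrix (Fin m) (Fin N) ℝ) (a b : EuclideanSpace ℝ (Fin N)) :
    R.mulVec (a - b) = R.mulVec a - R.mulVec b := Matrix.mulVec_sub R a b

example {m N : ℕ} (R : Matrix (Fin m) (Fin N) ℝ) (hR : IsUnit (R * R.transpose))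
    (v : Fin m → ℝ) : (R * R.transpose).mulVec ((R * R.transpose)⁻¹.mulVec v) = v := by
  rw [Matrix.mulVec_mulVec, Matrix.mul_nonsing_inv _ ((Matrix.isUnit_iff_isUnit_det _).mp hR),
    Matrix.one_mulVec]

lemma aux_fejer (Φ g h : ℕ → ℝ) (hg : ∀ k, 0 ≤ g k) (hh : ∀ k, 0 ≤ h k)
    (hΦ0 : ∀ k, 0 ≤ Φ k) (hstep : ∀ k, Φ (k + 1) + g k + h k ≤ Φ k) :
    Tendsto g atTop (𝓝 0) ∧ Tendsto h atTop (𝓝 0) ∧ ∀ k, Φ k ≤ Φ 0 := by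
  have hmono : ∀ k, Φ (k + 1) ≤ Φ k := fun k => by have := hstep k; have := hg k; have := hh k; linarith
  have hanti : Antitone Φ := antitone_nat_of_succ_le hmono
  have hbdd : BddBelow (Set.range Φ) := ⟨0, by rintro _ ⟨k, rfl⟩; exact hΦ0 k⟩
  have hlim : Tendsto Φ atTop (𝓝 (⨅ k, Φ k)) := tendsto_atTop_ciInf hanti hbdd
  have hshift : Tendsto (fun k => Φ (k + 1)) atTop (𝓝 (⨅ k, Φ k)) :=
    hlim.comp (tendsto_add_atTop_nat 1)
  have hdiff : Tendsto (fun k => Φ k - Φ (k + 1)) atTop (𝓝 0) := by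
    simpa using hlim.sub hshift
  refine ⟨?_, ?_, fun k => hanti (Nat.zero_le k)⟩
  · exact squeeze_zero hg (fun k => by have := hstep k; have := hh k; linarith) hdiff
  · exact squeeze_zero hh (fun k => by have := hstep k; have := hg k; linarith) hdiff

lemma aux_fejer2 (Φ : ℕ → ℝ) (hmono : ∀ k, Φ (k + 1) ≤ Φ k) (hΦ0 : ∀ k, 0 ≤ Φ k)
    (φ : ℕ → ℕ) (hφ : Tendsto φ atTop atTop)
    (h0 : Tendsto (fun j => Φ (φ j)) atTop (𝓝 0)) : Tendsto Φ atTop (𝓝 0) := by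
  have hanti : Antitone Φ := antitone_nat_of_succ_le hmono
  have hbdd : BddBelow (Set.range Φ) := ⟨0, by rintro _ ⟨k, rfl⟩; exact hΦ0 k⟩
  have hlim : Tendsto Φ atTop (𝓝 (⨅ k, Φ k)) := tendsto_atTop_ciInf hanti hbdd
  have h2 : Tendsto (fun j => Φ (φ j)) atTop (𝓝 (⨅ k, Φ k)) := hlim.comp hφ
  rwa [tendsto_nhds_unique h2 h0] at hlim

lemma aux_sq_tendsto {G : Type*} [NormedAddCommGroup G] (v : ℕ → G) (a : G) (c : ℝ)
    (hc : 0 < c) (g : ℕ → ℝ) (hg : Tendsto g atTop (𝓝 0))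
    (hle : ∀ k, c * ‖v k - a‖ ^ 2 ≤ g k) : Tendsto v atTop (𝓝 a) := by
  rw [← tendsto_sub_nhds_zero_iff]
  rw [tendsto_zero_iff_norm_tendsto_zero]
  have hsq : Tendsto (fun k => ‖v k - a‖ ^ 2) atTop (𝓝 0) := by
    have hdiv : Tendsto (fun k => g k / c) atTop (𝓝 0) := by
      simpa using hg.div_const c
    exact squeeze_zero (fun k => by positivity)
      (fun k => (le_div_iff₀ hc).mpr (by linarith [hle k])) hdiv
  have h2 := (Real.continuous_sqrt.tendsto' 0 0 Real.sqrt_zero).comp hsq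
  have h3 : (fun x => √x) ∘ (fun k => ‖v k - a‖ ^ 2) = fun k => ‖v k - a‖ := by
    funext k; simp [Function.comp, Real.sqrt_sq (norm_nonneg _)]
  rwa [h3] at h2

lemma aux_cs {E F : Type*} [NormedAddCommGroup E] [InnerProductSpace ℝ E]
    [NormedAddCommGroup F] [InnerProductSpace ℝ F] (L : E →L[ℝ] F) {γ τ : ℝ}
    (hγ : 0 < γ) (hτ : 0 < τ) (v : F) (w : E) :
    2 * τ * γ * ⟪v, L w⟫ ≤ Real.sqrt (γ * τ) * ‖L‖ * (τ * ‖v‖ ^ 2 + γ * ‖w‖ ^ 2) := by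
  set a := Real.sqrt τ with hadef
  set g := Real.sqrt γ with hgdef
  have ha : a * a = τ := Real.mul_self_sqrt hτ.le
  have hg : g * g = γ := Real.mul_self_sqrt hγ.le
  have ha0 : 0 ≤ a := Real.sqrt_nonneg τ
  have hg0 : 0 ≤ g := Real.sqrt_nonneg γ
  have hρ' : Real.sqrt (γ * τ) = g * a := Real.sqrt_mul hγ.le τ
  have h1 : ⟪v, L w⟫ ≤ ‖v‖ * (‖L‖ * ‖w‖) := by
    refine (real_inner_le_norm v (L w)).trans ?_
    exact mul_le_mul_of_nonneg_left (L.le_opNorm w) (norm_nonneg v)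
  have h2 : 2 * τ * γ * ⟪v, L w⟫ ≤ 2 * τ * γ * (‖v‖ * (‖L‖ * ‖w‖)) :=
    mul_le_mul_of_nonneg_left h1 (by positivity)
  have h3 : 2 * τ * γ * (‖v‖ * (‖L‖ * ‖w‖))
      ≤ (g * a) * ‖L‖ * (τ * ‖v‖ ^ 2 + γ * ‖w‖ ^ 2) := by
    rw [← ha, ← hg]
    nlinarith [mul_nonneg (mul_nonneg (norm_nonneg L) (mul_nonneg hg0 ha0))
      (sq_nonneg (a * ‖v‖ - g * ‖w‖))]
  rw [hρ']
  linarith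


set_option maxHeartbeats 1600000

/-- Corollary 4.2: convergence of the projected Chambolle–Pock algorithm for
min f(x) s.t. Rx = c, Sx = d, with projection onto the selection Rx = c. -/
theorem stmt_4 (N m n : ℕ)
    (f : EuclideanSpace ℝ (Fin N) → ℝ) (hf : ConvexOn ℝ Set.univ f)
    (R : Matrix (Fin m) (Fin N) ℝ) (S : Matrix (Fin n) (Fin N) ℝ)
    (hR : IsUnit (R * R.transpose))
    (c : EuclideanSpace ℝ (Fin m)) (d : EuclideanSpace ℝ (Fin n))
    (L : EuclideanSpace ℝ (Fin N) →L[ℝ] EuclideanSpace ℝ (Fin (m + n)))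
    (hLdef : ∀ z, L z = Fin.append (R.mulVec z) (S.mulVec z))
    (b : EuclideanSpace ℝ (Fin (m + n))) (hb : b = Fin.append c d)
    (γ τ : ℝ) (hγ : 0 < γ) (hτ : 0 < τ) (hpar : γ * τ * ‖L‖ ^ 2 < 1)
    (hsol : ∃ (x0 : EuclideanSpace ℝ (Fin N)) (u0 : EuclideanSpace ℝ (Fin (m + n))),
      R.mulVec x0 = c ∧ S.mulVec x0 = d ∧
        ∀ z, f x0 + ⟪u0, L x0⟫ ≤ f z + ⟪u0, L z⟫)
    (x p xb : ℕ → EuclideanSpace ℝ (Fin N))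
    (u : ℕ → EuclideanSpace ℝ (Fin (m + n)))
    (hxb0 : xb 0 = x 0)
    (hu : ∀ k, u (k + 1) = u k + γ • (L (xb k) - b))
    (hp : ∀ k, ∀ z,
      f (p (k + 1)) + ‖p (k + 1)
          - (x k - τ • (ContinuousLinearMap.adjoint L) (u (k + 1)))‖ ^ 2 / (2 * τ)
        ≤ f z + ‖z - (x k - τ • (ContinuousLinearMap.adjoint L) (u (k + 1)))‖ ^ 2 / (2 * τ))
    (hx : ∀ k, x (k + 1) = p (k + 1)
      - ((WithLp.equiv 2 _).symm (R.transpose.mulVec ((R * R.transpose)⁻¹.mulVec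
          (R.mulVec (p (k + 1)) - (WithLp.equiv 2 _) c))) : EuclideanSpace ℝ (Fin N)))
    (hxb : ∀ k, xb (k + 1) = x (k + 1) + p (k + 1) - x k) :
    ∃ (xhat : EuclideanSpace ℝ (Fin N)) (uhat : EuclideanSpace ℝ (Fin (m + n))),
      R.mulVec xhat = c ∧ S.mulVec xhat = d ∧
      (∀ z, R.mulVec z = c → S.mulVec z = d → f xhat ≤ f (WithLp.toLp 2 z)) ∧
      (∀ z, f xhat + ⟪uhat, L xhat - b⟫ ≤ f z + ⟪uhat, L z - b⟫) ∧
      Tendsto x atTop (𝓝 xhat) ∧ Tendsto u atTop (𝓝 uhat) := by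
  classical
  obtain ⟨x0, u0, hRx0, hSx0, hsad0⟩ := hsol
  have hfc : Continuous f := by
    have h := hf.continuousOn isOpen_univ
    rwa [continuousOn_univ] at h
  -- the contraction factor ρ
  set ρ : ℝ := Real.sqrt (γ * τ) * ‖L‖ with hρdef
  have hρ0 : 0 ≤ ρ := mul_nonneg (Real.sqrt_nonneg _) (norm_nonneg _)
  have hρsq : ρ ^ 2 = γ * τ * ‖L‖ ^ 2 := by
    rw [hρdef, mul_pow, Real.sq_sqrt (by positivity)]
  have hρ1 : ρ < 1 := by nlinarith
  have h1ρ : 0 < 1 - ρ := by linarith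
  have hcs : ∀ (v : EuclideanSpace ℝ (Fin (m + n))) (w : EuclideanSpace ℝ (Fin N)),
      2 * τ * γ * ⟪v, L w⟫ ≤ ρ * (τ * ‖v‖ ^ 2 + γ * ‖w‖ ^ 2) := fun v w =>
    aux_cs L hγ hτ v w
  -- the auxiliary sequence q
  set q : ℕ → EuclideanSpace ℝ (Fin N) := fun k => xb k - x k with hqdef
  have hq0 : q 0 = 0 := by simp only [hqdef]; rw [hxb0, sub_self]
  have hqs : ∀ k, q (k + 1) = p (k + 1) - x k := by
    intro k; simp only [hqdef]; rw [hxb k]; abel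
  have hxbq : ∀ k, xb k = x k + q k := by
    intro k; simp only [hqdef]; abel
  -- variational inequality of the prox step
  have VI : ∀ k z,
      ⟪(x k - τ • (ContinuousLinearMap.adjoint L) (u (k + 1))) - p (k + 1), z - p (k + 1)⟫
        ≤ τ * (f z - f (p (k + 1))) :=
    fun k z => aux_prox_vi f hf hτ _ _ (hp k) z
  -- projection facts
  have hPmX : ∀ k, p (k + 1) - x (k + 1)
      = ((WithLp.equiv 2 _).symm (R.transpose.mulVec ((R * R.transpose)⁻¹.mulVec
          (R.mulVec (p (k + 1)) - (WithLp.equiv 2 _) c))) : EuclideanSpace ℝ (Fin N)) := by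
    intro k; rw [hx k]; exact sub_sub_cancel _ _
  have hRx' : ∀ k, R.mulVec (x (k + 1)) = c := by
    intro k
    have e : R.mulVec (x (k + 1)) = R.mulVec (p (k + 1))
        - R.mulVec (R.transpose.mulVec ((R * R.transpose)⁻¹.mulVec
            (R.mulVec (p (k + 1)) - (WithLp.equiv 2 _) c))) := by
      rw [hx k]; exact Matrix.mulVec_sub R _ _
    rw [e, Matrix.mulVec_mulVec, Matrix.mulVec_mulVec,
      Matrix.mul_nonsing_inv _ ((Matrix.isUnit_iff_isUnit_det _).mp hR), Matrix.one_mulVec]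
    exact sub_sub_cancel _ _
  have horth : ∀ k (wv : EuclideanSpace ℝ (Fin N)), R.mulVec wv = 0 →
      ⟪p (k + 1) - x (k + 1), wv⟫ = 0 := by
    intro k wv hw
    rw [hPmX k, aux_inner_mulVec, hw, dotProduct_zero]
  -- the one-step Lyapunov descent, valid for any saddle point (xh, uh)
  have main_step : ∀ (xh : EuclideanSpace ℝ (Fin N)) (uh : EuclideanSpace ℝ (Fin (m + n))),
      R.mulVec xh = c → L xh = b →
      (∀ z, f xh + ⟪uh, L xh⟫ ≤ f z + ⟪uh, L z⟫) →
      ∀ k,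
      γ * ‖x (k + 1) - xh‖ ^ 2 + τ * ‖u (k + 1) - uh‖ ^ 2
          + 2 * τ * γ * ⟪u (k + 1) - uh, L (q (k + 1))⟫ + γ * ‖q (k + 1)‖ ^ 2
          + ((1 - ρ) * γ * ‖q k‖ ^ 2 + (1 - ρ) * τ * ‖u (k + 1) - u k‖ ^ 2)
        ≤ γ * ‖x k - xh‖ ^ 2 + τ * ‖u k - uh‖ ^ 2
          + 2 * τ * γ * ⟪u k - uh, L (q k)⟫ + γ * ‖q k‖ ^ 2 := by
    intro xh uh hRxh hLxh hsad k
    have hVI := VI k xh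
    have hsadP := hsad (p (k + 1))
    have h1 : ⟪x k - p (k + 1), xh - p (k + 1)⟫
        ≤ τ * ⟪uh - u (k + 1), L (p (k + 1) - xh)⟫ := by
      have e1 : (x k - τ • (ContinuousLinearMap.adjoint L) (u (k + 1))) - p (k + 1)
          = (x k - p (k + 1)) - τ • (ContinuousLinearMap.adjoint L) (u (k + 1)) := by abel
      rw [e1, inner_sub_left, real_inner_smul_left,
        ContinuousLinearMap.adjoint_inner_left] at hVI
      have e2 : L (xh - p (k + 1)) = -(L (p (k + 1) - xh)) := by
        rw [← map_neg]; congr 1; abel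
      rw [e2, inner_neg_right] at hVI
      have e3 : ⟪uh, L (p (k + 1))⟫ - ⟪uh, L xh⟫ = ⟪uh, L (p (k + 1) - xh)⟫ := by
        rw [map_sub, inner_sub_right]
      have h5 : τ * (f xh - f (p (k + 1))) ≤ τ * ⟪uh, L (p (k + 1) - xh)⟫ := by
        apply mul_le_mul_of_nonneg_left _ hτ.le
        rw [← e3]; linarith
      have e4 : ⟪uh - u (k + 1), L (p (k + 1) - xh)⟫
          = ⟪uh, L (p (k + 1) - xh)⟫ - ⟪u (k + 1), L (p (k + 1) - xh)⟫ :=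
        inner_sub_left _ _ _
      rw [e4]; linarith
    have h2 : u (k + 1) - u k = γ • L (x k + q k - xh) := by
      rw [hu k]
      have e : L (xb k) - b = L (x k + q k - xh) := by
        rw [← hLxh, ← map_sub, hxbq k]
      rw [← e]; abel
    have horth' : ⟪p (k + 1) - x (k + 1), x (k + 1) - xh⟫ = 0 := by
      apply horth
      have e : R.mulVec ((x (k + 1) - xh : EuclideanSpace ℝ (Fin N)))
          = R.mulVec (x (k + 1)) - R.mulVec xh := Matrix.mulVec_sub R _ _
      rw [e, hRx' k, hRxh, sub_self]
    have h3 : ‖p (k + 1) - xh‖ ^ 2 = ‖p (k + 1) - x (k + 1)‖ ^ 2 + ‖x (k + 1) - xh‖ ^ 2 := by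
      have he : p (k + 1) - xh = (p (k + 1) - x (k + 1)) + (x (k + 1) - xh) := by abel
      rw [he, norm_add_sq_real, horth']; ring
    have key := aux_step L hτ hγ hcs (x k) (p (k + 1)) (x (k + 1)) (q k) xh
      (u k) (u (k + 1)) uh h1 h2 h3
    rw [hqs k]
    have hnn : 0 ≤ γ * ‖p (k + 1) - x (k + 1)‖ ^ 2 := by positivity
    linarith
  -- lower bound for the Lyapunov function
  have lowerb : ∀ (xh : EuclideanSpace ℝ (Fin N)) (uh : EuclideanSpace ℝ (Fin (m + n))) (k : ℕ),
      γ * ‖x k - xh‖ ^ 2 + (1 - ρ) * τ * ‖u k - uh‖ ^ 2 + (1 - ρ) * γ * ‖q k‖ ^ 2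
      ≤ γ * ‖x k - xh‖ ^ 2 + τ * ‖u k - uh‖ ^ 2
          + 2 * τ * γ * ⟪u k - uh, L (q k)⟫ + γ * ‖q k‖ ^ 2 := by
    intro xh uh k
    have h := hcs (-(u k - uh)) (q k)
    rw [inner_neg_left, norm_neg] at h
    linarith
  have nonnegΦ : ∀ (xh : EuclideanSpace ℝ (Fin N)) (uh : EuclideanSpace ℝ (Fin (m + n))) (k : ℕ),
      0 ≤ γ * ‖x k - xh‖ ^ 2 + τ * ‖u k - uh‖ ^ 2
          + 2 * τ * γ * ⟪u k - uh, L (q k)⟫ + γ * ‖q k‖ ^ 2 := by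
    intro xh uh k
    refine le_trans ?_ (lowerb xh uh k)
    have := h1ρ.le
    positivity
  -- Phase 1 : Fejér monotonicity w.r.t. the given saddle point (x0, u0)
  have hLx0 : L x0 = b := by apply WithLp.ofLp_injective 2; rw [hLdef, hRx0, hSx0, hb]
  have step0 := main_step x0 u0 hRx0 hLx0 hsad0
  obtain ⟨hqg, hug, hbd0⟩ := aux_fejer
    (fun k => γ * ‖x k - x0‖ ^ 2 + τ * ‖u k - u0‖ ^ 2
        + 2 * τ * γ * ⟪u k - u0, L (q k)⟫ + γ * ‖q k‖ ^ 2)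
    (fun k => (1 - ρ) * γ * ‖q k‖ ^ 2)
    (fun k => (1 - ρ) * τ * ‖u (k + 1) - u k‖ ^ 2)
    (fun k => by have := h1ρ.le; positivity)
    (fun k => by have := h1ρ.le; positivity)
    (fun k => nonnegΦ x0 u0 k)
    (fun k => by linarith [step0 k])
  have hqlim : Tendsto q atTop (𝓝 0) := by
    refine aux_sq_tendsto q 0 ((1 - ρ) * γ) (by positivity) _ hqg (fun k => ?_)
    simp only [sub_zero]; exact le_refl _
  have hudiff : Tendsto (fun k => u (k + 1) - u k) atTop (𝓝 0) := by
    refine aux_sq_tendsto (fun k => u (k + 1) - u k) 0 ((1 - ρ) * τ) (by positivity) _ hug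
      (fun k => ?_)
    simp only [sub_zero]; exact le_refl _
  -- boundedness of the iterates and a convergent subsequence
  set Φ₀ : ℝ := γ * ‖x 0 - x0‖ ^ 2 + τ * ‖u 0 - u0‖ ^ 2
      + 2 * τ * γ * ⟪u 0 - u0, L (q 0)⟫ + γ * ‖q 0‖ ^ 2 with hΦ₀def
  set M : ℝ := Real.sqrt (Φ₀ / γ) + Real.sqrt (Φ₀ / ((1 - ρ) * τ)) with hMdef
  have hmem : ∀ k, ((x k, u k) : EuclideanSpace ℝ (Fin N) × EuclideanSpace ℝ (Fin (m + n)))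
      ∈ Metric.closedBall (x0, u0) M := by
    intro k
    have hk := (lowerb x0 u0 k).trans (hbd0 k)
    have hx1 : ‖x k - x0‖ ≤ Real.sqrt (Φ₀ / γ) := by
      have h2 : ‖x k - x0‖ ^ 2 ≤ Φ₀ / γ := by
        rw [le_div_iff₀ hγ]; nlinarith [sq_nonneg ‖u k - u0‖, sq_nonneg ‖q k‖, h1ρ.le,
          mul_nonneg (mul_nonneg h1ρ.le hτ.le) (sq_nonneg ‖u k - u0‖),
          mul_nonneg (mul_nonneg h1ρ.le hγ.le) (sq_nonneg ‖q k‖)]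
      calc ‖x k - x0‖ = Real.sqrt (‖x k - x0‖ ^ 2) := (Real.sqrt_sq (norm_nonneg _)).symm
        _ ≤ Real.sqrt (Φ₀ / γ) := Real.sqrt_le_sqrt h2
    have hu1 : ‖u k - u0‖ ≤ Real.sqrt (Φ₀ / ((1 - ρ) * τ)) := by
      have h2 : ‖u k - u0‖ ^ 2 ≤ Φ₀ / ((1 - ρ) * τ) := by
        rw [le_div_iff₀ (by positivity)]; nlinarith [sq_nonneg ‖x k - x0‖, sq_nonneg ‖q k‖,
          mul_nonneg hγ.le (sq_nonneg ‖x k - x0‖),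
          mul_nonneg (mul_nonneg h1ρ.le hγ.le) (sq_nonneg ‖q k‖)]
      calc ‖u k - u0‖ = Real.sqrt (‖u k - u0‖ ^ 2) := (Real.sqrt_sq (norm_nonneg _)).symm
        _ ≤ Real.sqrt (Φ₀ / ((1 - ρ) * τ)) := Real.sqrt_le_sqrt h2
    rw [Metric.mem_closedBall, Prod.dist_eq]
    have hs1 : 0 ≤ Real.sqrt (Φ₀ / γ) := Real.sqrt_nonneg _
    have hs2 : 0 ≤ Real.sqrt (Φ₀ / ((1 - ρ) * τ)) := Real.sqrt_nonneg _
    apply max_le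
    · rw [dist_eq_norm]; rw [hMdef]; linarith
    · rw [dist_eq_norm]; rw [hMdef]; linarith
  obtain ⟨astar, -, φ, hφmono, hφtend⟩ :=
    tendsto_subseq_of_bounded (Metric.isBounded_closedBall
      (x := ((x0, u0) : EuclideanSpace ℝ (Fin N) × EuclideanSpace ℝ (Fin (m + n)))) (r := M))
      hmem
  set xstar := astar.1 with hxstardef
  set ustar := astar.2 with hustardef
  have hφatTop : Tendsto φ atTop atTop := hφmono.tendsto_atTop
  have hxφ : Tendsto (fun j => x (φ j)) atTop (𝓝 xstar) := by
    have := (continuous_fst.tendsto astar).comp hφtend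
    exact this
  have huφ : Tendsto (fun j => u (φ j)) atTop (𝓝 ustar) := by
    have := (continuous_snd.tendsto astar).comp hφtend
    exact this
  have hqφ : Tendsto (fun j => q (φ j)) atTop (𝓝 0) := hqlim.comp hφatTop
  have hφ1atTop : Tendsto (fun j => φ j + 1) atTop atTop :=
    tendsto_atTop_mono (fun j => Nat.le_succ (φ j)) hφatTop
  have hqφ1 : Tendsto (fun j => q (φ j + 1)) atTop (𝓝 0) := hqlim.comp hφ1atTop
  have hudφ : Tendsto (fun j => u (φ j + 1) - u (φ j)) atTop (𝓝 0) := hudiff.comp hφatTop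
  have huφ1 : Tendsto (fun j => u (φ j + 1)) atTop (𝓝 ustar) := by
    have he : (fun j => u (φ j + 1)) = fun j => (u (φ j + 1) - u (φ j)) + u (φ j) := by
      funext j; abel
    rw [he]
    simpa using hudφ.add huφ
  have hpφ : Tendsto (fun j => p (φ j + 1)) atTop (𝓝 xstar) := by
    have he : (fun j => p (φ j + 1)) = fun j => q (φ j + 1) + x (φ j) := by
      funext j; rw [hqs]; abel
    rw [he]
    simpa using hqφ1.add hxφ
  have hxbφ : Tendsto (fun j => xb (φ j)) atTop (𝓝 xstar) := by
    have he : (fun j => xb (φ j)) = fun j => x (φ j) + q (φ j) := by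
      funext j; rw [hxbq]
    rw [he]
    simpa using hxφ.add hqφ
  -- the cluster point satisfies the constraint
  have hLxstar : L xstar = b := by
    have ht1 : Tendsto (fun j => L (xb (φ j)) - b) atTop (𝓝 (L xstar - b)) :=
      ((L.continuous.tendsto xstar).comp hxbφ).sub tendsto_const_nhds
    have ht2 : Tendsto (fun j => L (xb (φ j)) - b) atTop (𝓝 0) := by
      have he : ∀ j, L (xb (φ j)) - b = γ⁻¹ • (u (φ j + 1) - u (φ j)) := by
        intro j
        have h' : u (φ j + 1) - u (φ j) = γ • (L (xb (φ j)) - b) := by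
          rw [hu (φ j)]; abel
        rw [h', smul_smul, inv_mul_cancel₀ (ne_of_gt hγ), one_smul]
      simp only [he]
      have := hudφ.const_smul γ⁻¹
      simpa using this
    have := tendsto_nhds_unique ht1 ht2
    rwa [sub_eq_zero] at this
  have happ : ∀ i, Fin.append (R.mulVec xstar) (S.mulVec xstar) i = Fin.append c d i := by
    intro i
    have h' := congrArg WithLp.ofLp hLxstar
    rw [hLdef, hb] at h'
    exact congrFun h' i
  have hRxs : R.mulVec xstar = c := by
    funext i
    have := happ (Fin.castAdd n i)
    rwa [Fin.append_left, Fin.append_left] at this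
  have hSxs : S.mulVec xstar = d := by
    funext i
    have := happ (Fin.natAdd m i)
    rwa [Fin.append_right, Fin.append_right] at this
  -- the cluster point is a saddle point
  have hsadstar : ∀ z, f xstar + ⟪ustar, L xstar⟫ ≤ f z + ⟪ustar, L z⟫ := by
    intro z
    have hLHS : Tendsto (fun j =>
        ⟪(x (φ j) - τ • (ContinuousLinearMap.adjoint L) (u (φ j + 1))) - p (φ j + 1),
          z - p (φ j + 1)⟫) atTop
        (𝓝 ⟪(xstar - τ • (ContinuousLinearMap.adjoint L) ustar) - xstar, z - xstar⟫) := by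
      apply Filter.Tendsto.inner
      · exact (hxφ.sub
          ((((ContinuousLinearMap.adjoint L).continuous.tendsto _).comp huφ1).const_smul τ)).sub
          hpφ
      · exact tendsto_const_nhds.sub hpφ
    have hRHS : Tendsto (fun j => τ * (f z - f (p (φ j + 1)))) atTop
        (𝓝 (τ * (f z - f xstar))) :=
      (tendsto_const_nhds.sub ((hfc.tendsto _).comp hpφ)).const_mul τ
    have hle := le_of_tendsto_of_tendsto' hLHS hRHS (fun j => VI (φ j) z)
    have e : ⟪(xstar - τ • (ContinuousLinearMap.adjoint L) ustar) - xstar, z - xstar⟫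
        = -(τ * ⟪ustar, L z - L xstar⟫) := by
      have he : (xstar - τ • (ContinuousLinearMap.adjoint L) ustar) - xstar
          = -(τ • (ContinuousLinearMap.adjoint L) ustar) := by abel
      rw [he, inner_neg_left, real_inner_smul_left, ContinuousLinearMap.adjoint_inner_left,
        ← map_sub]
    rw [e] at hle
    have h' : τ * (-(⟪ustar, L z - L xstar⟫)) ≤ τ * (f z - f xstar) := by linarith
    have h'' := (mul_le_mul_iff_right₀ hτ).mp h'
    rw [inner_sub_right] at h''
    linarith
  -- Phase 2 : Fejér monotonicity w.r.t. the cluster point, full convergence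
  have steps := main_step xstar ustar hRxs hLxstar hsadstar
  have monos : ∀ k,
      (fun k => γ * ‖x k - xstar‖ ^ 2 + τ * ‖u k - ustar‖ ^ 2
        + 2 * τ * γ * ⟪u k - ustar, L (q k)⟫ + γ * ‖q k‖ ^ 2) (k + 1)
      ≤ (fun k => γ * ‖x k - xstar‖ ^ 2 + τ * ‖u k - ustar‖ ^ 2
        + 2 * τ * γ * ⟪u k - ustar, L (q k)⟫ + γ * ‖q k‖ ^ 2) k := by
    intro k
    have := steps k
    have h1 : 0 ≤ (1 - ρ) * γ * ‖q k‖ ^ 2 := by have := h1ρ.le; positivity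
    have h2 : 0 ≤ (1 - ρ) * τ * ‖u (k + 1) - u k‖ ^ 2 := by have := h1ρ.le; positivity
    simp only
    linarith
  have hΦsφ0 : Tendsto (fun j => γ * ‖x (φ j) - xstar‖ ^ 2 + τ * ‖u (φ j) - ustar‖ ^ 2
      + 2 * τ * γ * ⟪u (φ j) - ustar, L (q (φ j))⟫ + γ * ‖q (φ j)‖ ^ 2) atTop (𝓝 0) := by
    have t1 : Tendsto (fun j => x (φ j) - xstar) atTop (𝓝 0) := by
      have := hxφ.sub (tendsto_const_nhds :
        Tendsto (fun _ : ℕ => xstar) atTop (𝓝 xstar))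
      simpa using this
    have t2 : Tendsto (fun j => u (φ j) - ustar) atTop (𝓝 0) := by
      have := huφ.sub (tendsto_const_nhds :
        Tendsto (fun _ : ℕ => ustar) atTop (𝓝 ustar))
      simpa using this
    have n1 : Tendsto (fun j => γ * ‖x (φ j) - xstar‖ ^ 2) atTop (𝓝 0) := by
      have := ((t1.norm).pow 2).const_mul γ
      simpa using this
    have n2 : Tendsto (fun j => τ * ‖u (φ j) - ustar‖ ^ 2) atTop (𝓝 0) := by
      have := ((t2.norm).pow 2).const_mul τ
      simpa using this
    have n4 : Tendsto (fun j => γ * ‖q (φ j)‖ ^ 2) atTop (𝓝 0) := by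
      have := ((hqφ.norm).pow 2).const_mul γ
      simpa using this
    have n3 : Tendsto (fun j => 2 * τ * γ * ⟪u (φ j) - ustar, L (q (φ j))⟫) atTop (𝓝 0) := by
      have hi : Tendsto (fun j => ⟪u (φ j) - ustar, L (q (φ j))⟫) atTop (𝓝 0) := by
        have := Filter.Tendsto.inner (𝕜 := ℝ) t2 ((L.continuous.tendsto 0).comp hqφ)
        simpa using this
      have := hi.const_mul (2 * τ * γ)
      simpa [mul_comm] using this
    have := ((n1.add n2).add n3).add n4
    simpa using this
  have hΦs0 : Tendsto (fun k => γ * ‖x k - xstar‖ ^ 2 + τ * ‖u k - ustar‖ ^ 2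
      + 2 * τ * γ * ⟪u k - ustar, L (q k)⟫ + γ * ‖q k‖ ^ 2) atTop (𝓝 0) :=
    aux_fejer2 _ monos (fun k => nonnegΦ xstar ustar k) φ hφatTop hΦsφ0
  have hxlim : Tendsto x atTop (𝓝 xstar) := by
    refine aux_sq_tendsto x xstar γ hγ _ hΦs0 (fun k => ?_)
    have := lowerb xstar ustar k
    have h1 : 0 ≤ (1 - ρ) * τ * ‖u k - ustar‖ ^ 2 := by have := h1ρ.le; positivity
    have h2 : 0 ≤ (1 - ρ) * γ * ‖q k‖ ^ 2 := by have := h1ρ.le; positivity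
    linarith
  have hulim : Tendsto u atTop (𝓝 ustar) := by
    refine aux_sq_tendsto u ustar ((1 - ρ) * τ) (by positivity) _ hΦs0 (fun k => ?_)
    have := lowerb xstar ustar k
    have h1 : 0 ≤ γ * ‖x k - xstar‖ ^ 2 := by positivity
    have h2 : 0 ≤ (1 - ρ) * γ * ‖q k‖ ^ 2 := by have := h1ρ.le; positivity
    linarith
  refine ⟨xstar, ustar, hRxs, hSxs, ?_, ?_, hxlim, hulim⟩
  · intro z h1 h2
    have hLz : L (WithLp.toLp 2 z) = L xstar := by
      rw [hLxstar]; apply WithLp.ofLp_injective 2; rw [hLdef, WithLp.ofLp_toLp, h1, h2, hb]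
    have := hsadstar (WithLp.toLp 2 z)
    rw [hLz] at this
    linarith
  · intro z
    have := hsadstar z
    rw [inner_sub_right, inner_sub_right]
    linarith
end

section
/- Let H and G be real Hilbert spaces, L : H → G a bounded linear operator with adjoint L*, τ > 0, γ > 0, ρ ≥ 0, χ ≥ 0, β > 0, δ > 0. Let A : H → Set H be ρ-strongly monotone, B : G → Set G be χ-strongly monotone, C : H → H be β-cocoercive, and D : G → G be δ-cocoercive. Suppose x, x̄, p, x̂ ∈ H and u, η, w, û ∈ G satisfy the inclusions (x − p)/τ − L*w − Cx ∈ A p, (u − η)/γ + L x̄ − Du ∈ B η, −L*û − C x̂ ∈ A x̂, and L x̂ − D û ∈ B û. Then ‖x − x̂‖²/τ + ‖u − û‖²/γ ≥ (2ρ + 1/τ)‖p − x̂‖² + (2χ + 1/γ)‖η − û‖² + 2(⟨L(p − x̂), w − û⟩ − ⟨L(x̄ − x̂), η − û⟩) + (1/γ − 1/(2δ))‖η − u‖² + (1/τ − 1/(2β))‖p − x‖². -/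
open RealInnerProductSpace

set_option maxHeartbeats 1000000

/-- One-step primal-dual inequality combining strong monotonicity of A and B
and cocoercivity of C and D. -/
theorem stmt_6 {H G : Type*}
    [NormedAddCommGroup H] [InnerProductSpace ℝ H] [CompleteSpace H]
    [NormedAddCommGroup G] [InnerProductSpace ℝ G] [CompleteSpace G]
    (L : H →L[ℝ] G) (τ γ ρ χ β δ : ℝ)
    (hτ : 0 < τ) (hγ : 0 < γ) (hρ : 0 ≤ ρ) (hχ : 0 ≤ χ) (hβ : 0 < β) (hδ : 0 < δ)
    (A : H → Set H)
    (hA : ∀ x y u v, u ∈ A x → v ∈ A y → ρ * ‖x - y‖ ^ 2 ≤ ⟪x - y, u - v⟫)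
    (B : G → Set G)
    (hB : ∀ x y u v, u ∈ B x → v ∈ B y → χ * ‖x - y‖ ^ 2 ≤ ⟪x - y, u - v⟫)
    (C : H → H) (hC : ∀ x y, β * ‖C x - C y‖ ^ 2 ≤ ⟪C x - C y, x - y⟫)
    (D : G → G) (hD : ∀ x y, δ * ‖D x - D y‖ ^ 2 ≤ ⟪D x - D y, x - y⟫)
    (x xb p xhat : H) (u η w uhat : G)
    (h1 : τ⁻¹ • (x - p) - (ContinuousLinearMap.adjoint L) w - C x ∈ A p)
    (h2 : γ⁻¹ • (u - η) + L xb - D u ∈ B η)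
    (h3 : -(ContinuousLinearMap.adjoint L) uhat - C xhat ∈ A xhat)
    (h4 : L xhat - D uhat ∈ B uhat) :
    ‖x - xhat‖ ^ 2 / τ + ‖u - uhat‖ ^ 2 / γ ≥
      (2 * ρ + 1 / τ) * ‖p - xhat‖ ^ 2 + (2 * χ + 1 / γ) * ‖η - uhat‖ ^ 2
      + 2 * (⟪L (p - xhat), w - uhat⟫ - ⟪L (xb - xhat), η - uhat⟫)
      + (1 / γ - 1 / (2 * δ)) * ‖η - u‖ ^ 2
      + (1 / τ - 1 / (2 * β)) * ‖p - x‖ ^ 2 := by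
  -- Strong monotonicity of A at (p, xhat)
  have S1 := hA p xhat _ _ h1 h3
  have e1 : (τ⁻¹ • (x - p) - (ContinuousLinearMap.adjoint L) w - C x)
      - (-(ContinuousLinearMap.adjoint L) uhat - C xhat)
      = τ⁻¹ • (x - p) - (ContinuousLinearMap.adjoint L) (w - uhat) - (C x - C xhat) := by
    rw [map_sub]; abel
  rw [e1, inner_sub_right, inner_sub_right, real_inner_smul_right,
    ContinuousLinearMap.adjoint_inner_right] at S1
  -- Strong monotonicity of B at (η, uhat)
  have S2 := hB η uhat _ _ h2 h4
  have e2 : (γ⁻¹ • (u - η) + L xb - D u) - (L xhat - D uhat)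
      = γ⁻¹ • (u - η) + L (xb - xhat) - (D u - D uhat) := by
    rw [map_sub]; abel
  rw [e2, inner_sub_right, inner_add_right, real_inner_smul_right,
    real_inner_comm (L (xb - xhat)) (η - uhat)] at S2
  -- Polarization identities
  have pol1 : 2 * ⟪p - xhat, x - p⟫ = ‖x - xhat‖ ^ 2 - ‖p - xhat‖ ^ 2 - ‖p - x‖ ^ 2 := by
    have hx : x - xhat = (p - xhat) + (x - p) := by abel
    rw [hx, norm_add_sq_real, norm_sub_rev p x]; ring
  have pol2 : 2 * ⟪η - uhat, u - η⟫ = ‖u - uhat‖ ^ 2 - ‖η - uhat‖ ^ 2 - ‖η - u‖ ^ 2 := by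
    have hu : u - uhat = (η - uhat) + (u - η) := by abel
    rw [hu, norm_add_sq_real, norm_sub_rev η u]; ring
  have pol1' : τ⁻¹ * (2 * ⟪p - xhat, x - p⟫)
      = τ⁻¹ * (‖x - xhat‖ ^ 2 - ‖p - xhat‖ ^ 2 - ‖p - x‖ ^ 2) := by rw [pol1]
  have pol2' : γ⁻¹ * (2 * ⟪η - uhat, u - η⟫)
      = γ⁻¹ * (‖u - uhat‖ ^ 2 - ‖η - uhat‖ ^ 2 - ‖η - u‖ ^ 2) := by rw [pol2]
  -- Cocoercivity bounds via Young's inequality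
  have Q1 : -(2 * ⟪p - xhat, C x - C xhat⟫) ≤ ‖p - x‖ ^ 2 / (2 * β) := by
    have hc := hC x xhat
    have hdec : ⟪p - xhat, C x - C xhat⟫
        = ⟪C x - C xhat, x - xhat⟫ + ⟪C x - C xhat, p - x⟫ := by
      rw [real_inner_comm]
      have : p - xhat = (x - xhat) + (p - x) := by abel
      rw [this, inner_add_right]
    have hcs : -(‖C x - C xhat‖ * ‖p - x‖) ≤ ⟪C x - C xhat, p - x⟫ :=
      neg_le_of_neg_le (by simpa using (neg_le_abs _).trans (abs_real_inner_le_norm _ _))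
    rw [le_div_iff₀ (by positivity : (0:ℝ) < 2 * β)]
    rw [hdec]
    set c := ‖C x - C xhat‖ with hcdef
    set d := ‖p - x‖ with hddef
    nlinarith [sq_nonneg (2 * β * c - d), hβ.le, hc, hcs]
  have Q2 : -(2 * ⟪η - uhat, D u - D uhat⟫) ≤ ‖η - u‖ ^ 2 / (2 * δ) := by
    have hd := hD u uhat
    have hdec : ⟪η - uhat, D u - D uhat⟫
        = ⟪D u - D uhat, u - uhat⟫ + ⟪D u - D uhat, η - u⟫ := by
      rw [real_inner_comm]
      have : η - uhat = (u - uhat) + (η - u) := by abel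
      rw [this, inner_add_right]
    have hcs : -(‖D u - D uhat‖ * ‖η - u‖) ≤ ⟪D u - D uhat, η - u⟫ :=
      neg_le_of_neg_le (by simpa using (neg_le_abs _).trans (abs_real_inner_le_norm _ _))
    rw [le_div_iff₀ (by positivity : (0:ℝ) < 2 * δ)]
    rw [hdec]
    set c := ‖D u - D uhat‖ with hcdef
    set d := ‖η - u‖ with hddef
    nlinarith [sq_nonneg (2 * δ * c - d), hδ.le, hd, hcs]
  have F1 : 2 * (ρ * ‖p - xhat‖ ^ 2) ≤ τ⁻¹ * ‖x - xhat‖ ^ 2 - τ⁻¹ * ‖p - xhat‖ ^ 2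
      - τ⁻¹ * ‖p - x‖ ^ 2 - 2 * ⟪L (p - xhat), w - uhat⟫
      - 2 * ⟪p - xhat, C x - C xhat⟫ := by linarith [S1, pol1']
  have F2 : 2 * (χ * ‖η - uhat‖ ^ 2) ≤ γ⁻¹ * ‖u - uhat‖ ^ 2 - γ⁻¹ * ‖η - uhat‖ ^ 2
      - γ⁻¹ * ‖η - u‖ ^ 2 + 2 * ⟪L (xb - xhat), η - uhat⟫
      - 2 * ⟪η - uhat, D u - D uhat⟫ := by linarith [S2, pol2']
  have g1 : ‖x - xhat‖ ^ 2 / τ = τ⁻¹ * ‖x - xhat‖ ^ 2 := by ring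
  have g2 : ‖u - uhat‖ ^ 2 / γ = γ⁻¹ * ‖u - uhat‖ ^ 2 := by ring
  have g3 : ‖p - x‖ ^ 2 / (2 * β) = (2 * β)⁻¹ * ‖p - x‖ ^ 2 := by ring
  have g4 : ‖η - u‖ ^ 2 / (2 * δ) = (2 * δ)⁻¹ * ‖η - u‖ ^ 2 := by ring
  rw [g3] at Q1
  rw [g4] at Q2
  rw [ge_iff_le, g1, g2]
  have e3 : (1:ℝ) / τ = τ⁻¹ := one_div τ
  have e4 : (1:ℝ) / γ = γ⁻¹ := one_div γ
  have e5 : (1:ℝ) / (2 * β) = (2 * β)⁻¹ := one_div _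
  have e6 : (1:ℝ) / (2 * δ) = (2 * δ)⁻¹ := one_div _
  rw [e3, e4, e5, e6]
  set n1 := ‖x - xhat‖ ^ 2
  set n2 := ‖u - uhat‖ ^ 2
  set n3 := ‖p - xhat‖ ^ 2
  set n4 := ‖η - uhat‖ ^ 2
  set n5 := ‖η - u‖ ^ 2
  set n6 := ‖p - x‖ ^ 2
  set I1 : ℝ := ⟪L (p - xhat), w - uhat⟫
  set I2 : ℝ := ⟪L (xb - xhat), η - uhat⟫
  set I3 : ℝ := ⟪p - xhat, C x - C xhat⟫
  set I4 : ℝ := ⟪η - uhat, D u - D uhat⟫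
  have hb : (2 * β)⁻¹ = 2⁻¹ * β⁻¹ := by rw [mul_inv]
  have hd2 : (2 * δ)⁻¹ = 2⁻¹ * δ⁻¹ := by rw [mul_inv]
  rw [hb] at Q1
  rw [hd2] at Q2
  rw [hb, hd2]
  linarith [F1, F2, Q1, Q2]
end

section
/- Let β, δ, τ, γ be positive reals and ℓ ≥ 0. If 2·min{1/γ, 1/τ}·(1 − √(τγℓ²))·min{β, δ} > 1, then (1/τ − 1/(2β))·(1/γ − 1/(2δ)) > ℓ². (That is, the step-size condition required by Vũ's algorithm implies the strict version of the parameter condition ‖L‖² ≤ (1/τ − 1/(2β))(1/γ − 1/(2δ)) used in this paper, with ℓ playing the role of ‖L‖.) -/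
/-- The step-size condition of Vũ's algorithm implies the strict version of
the parameter condition used in the paper. -/
theorem stmt_9 (β δ τ γ ℓ : ℝ) (hβ : 0 < β) (hδ : 0 < δ) (hτ : 0 < τ) (hγ : 0 < γ)
    (hℓ : 0 ≤ ℓ)
    (h : 2 * (min (1 / γ) (1 / τ) * (1 - Real.sqrt (τ * γ * ℓ ^ 2))) * min β δ > 1) :
    (1 / τ - 1 / (2 * β)) * (1 / γ - 1 / (2 * δ)) > ℓ ^ 2 := by
  set s := Real.sqrt (τ * γ * ℓ ^ 2) with hs
  have hs0 : 0 ≤ s := Real.sqrt_nonneg _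
  have hs2 : s ^ 2 = τ * γ * ℓ ^ 2 := by
    rw [hs, Real.sq_sqrt]; positivity
  have hm1 : min (1 / γ) (1 / τ) ≤ 1 / τ := min_le_right _ _
  have hm2 : min (1 / γ) (1 / τ) ≤ 1 / γ := min_le_left _ _
  have hm0 : 0 < min (1 / γ) (1 / τ) := lt_min (by positivity) (by positivity)
  have hb1 : min β δ ≤ β := min_le_left _ _
  have hb2 : min β δ ≤ δ := min_le_right _ _
  have hb0 : 0 < min β δ := lt_min hβ hδ
  have h1s : 0 < 1 - s := by nlinarith [mul_pos hm0 hb0]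
  have h1 : 1 / (2 * β) < (1 / τ) * (1 - s) := by
    rw [div_lt_iff₀ (by positivity)]
    nlinarith [mul_le_mul_of_nonneg_right hm1 (le_of_lt h1s),
      mul_le_mul_of_nonneg_left hb1 (mul_pos hm0 h1s).le]
  have h2 : 1 / (2 * δ) < (1 / γ) * (1 - s) := by
    rw [div_lt_iff₀ (by positivity)]
    nlinarith [mul_le_mul_of_nonneg_right hm2 (le_of_lt h1s),
      mul_le_mul_of_nonneg_left hb2 (mul_pos hm0 h1s).le]
  have k1 : s / τ < 1 / τ - 1 / (2 * β) := by
    have : (1 / τ) * (1 - s) = 1 / τ - s / τ := by ring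
    linarith [this ▸ h1]
  have k2 : s / γ < 1 / γ - 1 / (2 * δ) := by
    have : (1 / γ) * (1 - s) = 1 / γ - s / γ := by ring
    linarith [this ▸ h2]
  have hst : 0 ≤ s / τ := by positivity
  have hsg : 0 ≤ s / γ := by positivity
  have key : s / τ * (s / γ) < (1 / τ - 1 / (2 * β)) * (1 / γ - 1 / (2 * δ)) :=
    mul_lt_mul' k1.le k2 hsg (lt_of_le_of_lt hst k1)
  have : s / τ * (s / γ) = ℓ ^ 2 := by
    field_simp
    nlinarith [hs2]
  linarith [this ▸ key]
end

section
/- Let H and G be real Hilbert spaces and adopt the primal-dual algorithm setting with ρ = 0 and χ = 0 (so A and B are monotone), θ_k ≡ 1, τ_k ≡ τ ∈ (0,2β), γ_k ≡ γ ∈ (0,2δ), and the strict parameter condition ‖L‖² < (1/τ − 1/(2β))(1/γ − 1/(2δ)). Assume that a primal-dual solution exists. Then the sequences (p^k) and (η^k) are bounded, and the residuals converge strongly to zero: x^k − p^k → 0, u^k − η^k → 0, η^{k+1} − u^k → 0, and p^{k+1} − x^k → 0 as k → ∞. -/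
open RealInnerProductSpace Filter Topology

private lemma aux_tendsto_of_sq {X : Type*} [NormedAddCommGroup X] (v : ℕ → X) (g : ℕ → ℝ)
    (hg : Tendsto g atTop (𝓝 0)) (hb : ∀ k, ‖v k‖ ^ 2 ≤ g k) :
    Tendsto v atTop (𝓝 0) := by
  rw [tendsto_zero_iff_norm_tendsto_zero]
  have h1 : Tendsto (fun k => ‖v k‖ ^ 2) atTop (𝓝 0) :=
    squeeze_zero (fun k => by positivity) hb hg
  have h2 := h1.sqrt
  simpa [Real.sqrt_sq (norm_nonneg _)] using h2

set_option maxHeartbeats 2000000 in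
/-- In the monotone case with θ ≡ 1, constant step sizes and strict parameter
condition, the sequences (p^k), (η^k) are bounded and the residuals
x^k − p^k, u^k − η^k, η^{k+1} − u^k, p^{k+1} − x^k converge strongly to 0. -/
theorem stmt_12 {H G : Type*}
    [NormedAddCommGroup H] [InnerProductSpace ℝ H] [CompleteSpace H]
    [NormedAddCommGroup G] [InnerProductSpace ℝ G] [CompleteSpace G]
    (V : Submodule ℝ G) [CompleteSpace V]
    (L : H →L[ℝ] G) (hL0 : L ≠ 0) (hran : ∀ z, L z ∈ V)
    (β δ : ℝ) (hβ : 0 < β) (hδ : 0 < δ)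
    (A : H → Set H)
    (hA : ∀ x y u v, u ∈ A x → v ∈ A y → 0 ≤ ⟪x - y, u - v⟫)
    (B : G → Set G)
    (hB : ∀ x y u v, u ∈ B x → v ∈ B y → 0 ≤ ⟪x - y, u - v⟫)
    (C : H → H) (hC : ∀ x y, β * ‖C x - C y‖ ^ 2 ≤ ⟪C x - C y, x - y⟫)
    (D : G → G) (hD : ∀ x y, δ * ‖D x - D y‖ ^ 2 ≤ ⟪D x - D y, x - y⟫)
    (α : ℝ) (hα : α ∈ Set.Ioo (0 : ℝ) 1)
    (T : H → H) (hTfix : ∃ z, T z = z)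
    (hT : ∀ z y, T y = y → ‖T z - y‖ ^ 2 ≤ ‖z - y‖ ^ 2 - ((1 - α) / α) * ‖z - T z‖ ^ 2)
    (τ γ : ℝ) (hτ : τ ∈ Set.Ioo (0 : ℝ) (2 * β)) (hγ : γ ∈ Set.Ioo (0 : ℝ) (2 * δ))
    (hpar : ‖L‖ ^ 2 < (1 / τ - 1 / (2 * β)) * (1 / γ - 1 / (2 * δ)))
    (x p xb : ℕ → H) (u η : ℕ → G)
    (hxb0 : xb 0 = x 0)
    (halg1 : ∀ k, γ⁻¹ • (u k - η (k + 1)) + L (xb k) - D (u k) ∈ B (η (k + 1)))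
    (halg2 : ∀ k, u (k + 1) = (V.orthogonalProjectionOnto (η (k + 1)) : G))
    (halg3 : ∀ k, τ⁻¹ • (x k - p (k + 1))
        - (ContinuousLinearMap.adjoint L) (u (k + 1)) - C (x k) ∈ A (p (k + 1)))
    (halg4 : ∀ k, x (k + 1) = T (p (k + 1)))
    (halg5 : ∀ k, xb (k + 1) = x (k + 1) + (p (k + 1) - x k))
    (hexists : ∃ (x0 : H) (u0 : G), T x0 = x0 ∧ u0 ∈ V ∧
      -(ContinuousLinearMap.adjoint L) u0 - C x0 ∈ A x0 ∧ L x0 - D u0 ∈ B u0) :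
    (∃ M : ℝ, ∀ k, ‖p k‖ ≤ M) ∧ (∃ M : ℝ, ∀ k, ‖η k‖ ≤ M) ∧
      Tendsto (fun k => x k - p k) atTop (𝓝 0) ∧
      Tendsto (fun k => u k - η k) atTop (𝓝 0) ∧
      Tendsto (fun k => η (k + 1) - u k) atTop (𝓝 0) ∧
      Tendsto (fun k => p (k + 1) - x k) atTop (𝓝 0) := by
  obtain ⟨xh, uh, hfix, huhV, hAh, hBh⟩ := hexists
  obtain ⟨hτ0, hτ2⟩ := hτ
  obtain ⟨hγ0, hγ2⟩ := hγ
  obtain ⟨hα0, hα1⟩ := hα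
  have hβ2 : (0:ℝ) < 2*β := by linarith
  have hδ2 : (0:ℝ) < 2*δ := by linarith
  have hP : 0 < 1/τ - 1/(2*β) := sub_pos.2 (one_div_lt_one_div_of_lt hτ0 hτ2)
  have hQ : 0 < 1/γ - 1/(2*δ) := sub_pos.2 (one_div_lt_one_div_of_lt hγ0 hγ2)
  have hLpos : 0 < ‖L‖ := norm_pos_iff.2 hL0
  have hL2 : 0 < ‖L‖^2 := by positivity
  obtain ⟨a, hadef⟩ : ∃ a : ℝ, a = (‖L‖^2/(1/γ - 1/(2*δ)) + (1/τ - 1/(2*β)))/2 := ⟨_, rfl⟩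
  have hdivP : ‖L‖^2/(1/γ - 1/(2*δ)) < 1/τ - 1/(2*β) := (div_lt_iff₀ hQ).2 hpar
  have ha0 : 0 < a := by
    rw [hadef]
    have h1 : 0 < ‖L‖^2/(1/γ - 1/(2*δ)) := div_pos hL2 hQ
    linarith
  have haP : a < 1/τ - 1/(2*β) := by rw [hadef]; linarith
  have haL : ‖L‖^2/(1/γ - 1/(2*δ)) < a := by rw [hadef]; linarith
  have hLaQ : ‖L‖^2/a < 1/γ - 1/(2*δ) := by
    rw [div_lt_iff₀ ha0]
    have h1 := (div_lt_iff₀ hQ).1 haL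
    linarith [mul_comm a (1/γ - 1/(2*δ))]
  have hLa0 : 0 ≤ ‖L‖^2/a := le_of_lt (by positivity)
  have hQa : 0 < 1/γ - ‖L‖^2/a := by
    have : (0:ℝ) < 1/(2*δ) := by positivity
    linarith
  have hPa : 0 < 1/τ - 1/(2*β) - a := by linarith
  have hQL : 0 < 1/γ - 1/(2*δ) - ‖L‖^2/a := by linarith
  have hγpos : (0:ℝ) < 1/γ := by positivity
  have hcα : 0 < (1-α)/α * (1/τ) := by
    have h1 : 0 < (1-α)/α := div_pos (by linarith) hα0
    have h2 : (0:ℝ) < 1/τ := by positivity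
    exact mul_pos h1 h2
  -- e k := xb k - x k ;  energy function
  obtain ⟨E, hEdef⟩ : ∃ E : ℕ → ℝ, E = fun k => 1/τ*‖x k - xh‖^2 + 1/γ*‖u k - uh‖^2
      + 2*⟪L (xb k - x k), u k - uh⟫ + a*‖xb k - x k‖^2 := ⟨_, rfl⟩
  have hek : ∀ k, xb (k+1) - x (k+1) = p (k+1) - x k := by
    intro k; rw [halg5 k]; abel
  -- membership of iterates
  have huV : ∀ k, u (k+1) ∈ V := by
    intro k; rw [halg2 k]; exact Submodule.coe_mem _
  have horth : ∀ k (z : G), z ∈ V → ⟪z, η (k+1) - u (k+1)⟫ = 0 := by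
    intro k z hz
    rw [halg2 k]
    exact (V.mem_orthogonal _).1 (V.sub_starProjection_mem_orthogonal (η (k+1))) z hz
  -- quadratic completion identity helper
  have hquad : ∀ s r : ℝ, 2*(‖L‖*s*r) ≤ a*s^2 + ‖L‖^2/a*r^2 := by
    intro s r
    have hid : a*s^2 + ‖L‖^2/a*r^2 - 2*(‖L‖*s*r) = (a*s - ‖L‖*r)^2/a := by
      field_simp
      ring
    linarith [div_nonneg (sq_nonneg (a*s - ‖L‖*r)) ha0.le]
  -- lower bound for E
  have Elb : ∀ k, 1/τ*‖x k - xh‖^2 + (1/γ - ‖L‖^2/a)*‖u k - uh‖^2 ≤ E k := by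
    intro k
    have hcs : |⟪L (xb k - x k), u k - uh⟫| ≤ ‖L (xb k - x k)‖ * ‖u k - uh‖ :=
      abs_real_inner_le_norm _ _
    have hop : ‖L (xb k - x k)‖ * ‖u k - uh‖ ≤ (‖L‖*‖xb k - x k‖) * ‖u k - uh‖ :=
      mul_le_mul_of_nonneg_right (L.le_opNorm _) (norm_nonneg _)
    have hq := hquad ‖xb k - x k‖ ‖u k - uh‖
    have habs := abs_le.1 hcs
    simp only [hEdef]
    linarith [habs.1, hop, hq]
  have hEpos : ∀ k, 0 ≤ E k := by
    intro k
    have h1 := Elb k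
    linarith [mul_nonneg hQa.le (sq_nonneg ‖u k - uh‖),
      mul_nonneg (le_of_lt (show (0:ℝ) < 1/τ by positivity)) (sq_nonneg ‖x k - xh‖)]
  -- Step A : primal resolvent inequality
  have stepA : ∀ k, 1/τ*‖p (k+1) - xh‖^2 ≤ 1/τ*‖x k - xh‖^2
      - (1/τ - 1/(2*β))*‖p (k+1) - x k‖^2
      - 2*⟪L (p (k+1) - xh), u (k+1) - uh⟫ := by
    intro k
    have hmono := hA (p (k+1)) xh _ _ (halg3 k) hAh
    have hexp : ⟪p (k+1) - xh, (τ⁻¹ • (x k - p (k+1))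
          - (ContinuousLinearMap.adjoint L) (u (k+1)) - C (x k))
          - (-(ContinuousLinearMap.adjoint L) uh - C xh)⟫
        = τ⁻¹ * ⟪p (k+1) - xh, x k - p (k+1)⟫
          - ⟪L (p (k+1) - xh), u (k+1) - uh⟫
          - ⟪p (k+1) - xh, C (x k) - C xh⟫ := by
      simp only [inner_sub_right, inner_neg_right, real_inner_smul_right,
        ContinuousLinearMap.adjoint_inner_right]
      ring
    rw [hexp] at hmono
    have hcoco := hC (x k) xh
    have hcs := abs_real_inner_le_norm (p (k+1) - x k) (C (x k) - C xh)
    have hsplit : ⟪p (k+1) - xh, C (x k) - C xh⟫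
        = ⟪C (x k) - C xh, x k - xh⟫ + ⟪p (k+1) - x k, C (x k) - C xh⟫ := by
      have h : p (k+1) - xh = (x k - xh) + (p (k+1) - x k) := by abel
      rw [h, inner_add_left, real_inner_comm (C (x k) - C xh) (x k - xh)]
    have hZ : -(1/(2*β) * ‖p (k+1) - x k‖^2) ≤ 2*⟪p (k+1) - xh, C (x k) - C xh⟫ := by
      rw [hsplit]
      have habs := abs_le.1 hcs
      have hid : 2*(β*‖C (x k) - C xh‖^2) - 2*(‖p (k+1) - x k‖*‖C (x k) - C xh‖)
          + 1/(2*β)*‖p (k+1) - x k‖^2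
          = (2*β*‖C (x k) - C xh‖ - ‖p (k+1) - x k‖)^2/(2*β) := by
        field_simp
        ring
      linarith [div_nonneg (sq_nonneg (2*β*‖C (x k) - C xh‖ - ‖p (k+1) - x k‖)) hβ2.le,
        habs.1, hcoco]
    have hpol : ‖x k - xh‖^2 = ‖p (k+1) - xh‖^2 + 2*⟪p (k+1) - xh, x k - p (k+1)⟫
        + ‖x k - p (k+1)‖^2 := by
      have h : x k - xh = (p (k+1) - xh) + (x k - p (k+1)) := by abel
      rw [h, norm_add_sq_real]
    have hns : ‖x k - p (k+1)‖ = ‖p (k+1) - x k‖ := norm_sub_rev _ _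
    rw [hns] at hpol
    have hX : ⟪p (k+1) - xh, x k - p (k+1)⟫
        = (‖x k - xh‖^2 - ‖p (k+1) - xh‖^2 - ‖p (k+1) - x k‖^2)/2 := by linarith
    rw [hX] at hmono
    have hτinv : τ⁻¹ = 1/τ := (one_div τ).symm
    rw [hτinv] at hmono
    linarith
  -- Step B : dual resolvent inequality
  have stepB : ∀ k, 1/γ*‖η (k+1) - uh‖^2 ≤ 1/γ*‖u k - uh‖^2
      - (1/γ - 1/(2*δ))*‖η (k+1) - u k‖^2
      + 2*⟪L (xb k - xh), η (k+1) - uh⟫ := by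
    intro k
    have hmono := hB (η (k+1)) uh _ _ (halg1 k) hBh
    have hexp : ⟪η (k+1) - uh, (γ⁻¹ • (u k - η (k+1)) + L (xb k) - D (u k))
          - (L xh - D uh)⟫
        = γ⁻¹ * ⟪η (k+1) - uh, u k - η (k+1)⟫
          + ⟪η (k+1) - uh, L (xb k) - L xh⟫
          - ⟪η (k+1) - uh, D (u k) - D uh⟫ := by
      simp only [inner_sub_right, inner_add_right, real_inner_smul_right]
      ring
    have hcomm : ⟪η (k+1) - uh, L (xb k) - L xh⟫ = ⟪L (xb k - xh), η (k+1) - uh⟫ := by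
      rw [map_sub]; exact real_inner_comm _ _
    rw [hexp, hcomm] at hmono
    have hcoco := hD (u k) uh
    have hcs := abs_real_inner_le_norm (η (k+1) - u k) (D (u k) - D uh)
    have hsplit : ⟪η (k+1) - uh, D (u k) - D uh⟫
        = ⟪D (u k) - D uh, u k - uh⟫ + ⟪η (k+1) - u k, D (u k) - D uh⟫ := by
      have h : η (k+1) - uh = (u k - uh) + (η (k+1) - u k) := by abel
      rw [h, inner_add_left, real_inner_comm (D (u k) - D uh) (u k - uh)]
    have hZ : -(1/(2*δ) * ‖η (k+1) - u k‖^2) ≤ 2*⟪η (k+1) - uh, D (u k) - D uh⟫ := by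
      rw [hsplit]
      have habs := abs_le.1 hcs
      have hid : 2*(δ*‖D (u k) - D uh‖^2) - 2*(‖η (k+1) - u k‖*‖D (u k) - D uh‖)
          + 1/(2*δ)*‖η (k+1) - u k‖^2
          = (2*δ*‖D (u k) - D uh‖ - ‖η (k+1) - u k‖)^2/(2*δ) := by
        field_simp
        ring
      linarith [div_nonneg (sq_nonneg (2*δ*‖D (u k) - D uh‖ - ‖η (k+1) - u k‖)) hδ2.le,
        habs.1, hcoco]
    have hpol : ‖u k - uh‖^2 = ‖η (k+1) - uh‖^2 + 2*⟪η (k+1) - uh, u k - η (k+1)⟫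
        + ‖u k - η (k+1)‖^2 := by
      have h : u k - uh = (η (k+1) - uh) + (u k - η (k+1)) := by abel
      rw [h, norm_add_sq_real]
    have hns : ‖u k - η (k+1)‖ = ‖η (k+1) - u k‖ := norm_sub_rev _ _
    rw [hns] at hpol
    have hX : ⟪η (k+1) - uh, u k - η (k+1)⟫
        = (‖u k - uh‖^2 - ‖η (k+1) - uh‖^2 - ‖η (k+1) - u k‖^2)/2 := by linarith
    rw [hX] at hmono
    have hγinv : γ⁻¹ = 1/γ := (one_div γ).symm
    rw [hγinv] at hmono
    linarith
  -- projection Pythagoras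
  have S3 : ∀ k, ‖η (k+1) - uh‖^2 = ‖u (k+1) - uh‖^2 + ‖η (k+1) - u (k+1)‖^2 := by
    intro k
    have h : η (k+1) - uh = (u (k+1) - uh) + (η (k+1) - u (k+1)) := by abel
    rw [h, norm_add_sq_real, horth k _ (V.sub_mem (huV k) huhV)]
    ring
  have S4 : ∀ k, ⟪L (xb k - xh), η (k+1) - uh⟫ = ⟪L (xb k - xh), u (k+1) - uh⟫ := by
    intro k
    have h : η (k+1) - uh = (u (k+1) - uh) + (η (k+1) - u (k+1)) := by abel
    rw [h, inner_add_right, horth k _ (hran _), add_zero]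
  -- inner product splitting
  have S5 : ∀ k, ⟪L (xb k - xh), u (k+1) - uh⟫ - ⟪L (p (k+1) - xh), u (k+1) - uh⟫
      = -⟪L (p (k+1) - x k), u (k+1) - uh⟫ + ⟪L (xb k - x k), u k - uh⟫
        + ⟪L (xb k - x k), u (k+1) - u k⟫ := by
    intro k
    simp only [map_sub, inner_sub_left, inner_sub_right]
    ring
  -- cross term bound
  have S6 : ∀ k, 2*⟪L (xb k - x k), u (k+1) - u k⟫
      ≤ a*‖xb k - x k‖^2 + ‖L‖^2/a*‖η (k+1) - u k‖^2 := by
    intro k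
    have hcs : |⟪L (xb k - x k), u (k+1) - u k⟫| ≤ ‖L (xb k - x k)‖ * ‖u (k+1) - u k‖ :=
      abs_real_inner_le_norm _ _
    have hop : ‖L (xb k - x k)‖ * ‖u (k+1) - u k‖
        ≤ (‖L‖*‖xb k - x k‖) * ‖u (k+1) - u k‖ :=
      mul_le_mul_of_nonneg_right (L.le_opNorm _) (norm_nonneg _)
    have habs := abs_le.1 hcs
    rcases k with _ | j
    · rw [hxb0, sub_self]
      simp only [map_zero, inner_zero_left, norm_zero]
      linarith [mul_nonneg hLa0 (sq_nonneg ‖η 1 - u 0‖)]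
    · -- u (j+1) ∈ V, so projection is nonexpansive at u (j+1)
      have hpyth : ‖η (j+2) - u (j+1)‖^2
          = ‖u (j+2) - u (j+1)‖^2 + ‖η (j+2) - u (j+2)‖^2 := by
        have h : η (j+2) - u (j+1) = (u (j+2) - u (j+1)) + (η (j+2) - u (j+2)) := by abel
        rw [h, norm_add_sq_real, horth (j+1) _ (V.sub_mem (huV (j+1)) (huV j))]
        ring
      have hle : ‖u (j+2) - u (j+1)‖^2 ≤ ‖η (j+2) - u (j+1)‖^2 := by
        linarith [sq_nonneg ‖η (j+2) - u (j+2)‖]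
      have hq := hquad ‖xb (j+1) - x (j+1)‖ ‖u (j+2) - u (j+1)‖
      have hmono : ‖L‖^2/a*‖u (j+2) - u (j+1)‖^2 ≤ ‖L‖^2/a*‖η (j+2) - u (j+1)‖^2 :=
        mul_le_mul_of_nonneg_left hle hLa0
      linarith [habs.2, hop, hq, hmono]
  -- averaged operator step
  have S7 : ∀ k, 1/τ*‖x (k+1) - xh‖^2 ≤ 1/τ*‖p (k+1) - xh‖^2
      - (1-α)/α*(1/τ)*‖p (k+1) - x (k+1)‖^2 := by
    intro k
    have h := hT (p (k+1)) xh hfix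
    rw [← halg4 k] at h
    have hpos : (0:ℝ) ≤ 1/τ := by positivity
    linarith [mul_le_mul_of_nonneg_left h hpos]
  -- the one-step energy inequality
  have Estep : ∀ k, E (k+1) + (1/τ - 1/(2*β) - a)*‖p (k+1) - x k‖^2
      + (1/γ - 1/(2*δ) - ‖L‖^2/a)*‖η (k+1) - u k‖^2
      + 1/γ*‖η (k+1) - u (k+1)‖^2
      + (1-α)/α*(1/τ)*‖p (k+1) - x (k+1)‖^2 ≤ E k := by
    intro k
    have h1 := stepA k
    have h2 := stepB k
    have h3 := S3 k
    have h3' : 1/γ*‖η (k+1) - uh‖^2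
        = 1/γ*‖u (k+1) - uh‖^2 + 1/γ*‖η (k+1) - u (k+1)‖^2 := by rw [h3]; ring
    have h4 := S4 k
    have h5 := S5 k
    have h6 := S6 k
    have h7 := S7 k
    simp only [hEdef, hek k]
    rw [h4] at h2
    linarith
  -- consequences : monotonicity and nonnegativity of E
  have hEmono : ∀ k, E (k+1) ≤ E k := by
    intro k
    linarith [Estep k, mul_nonneg hPa.le (sq_nonneg ‖p (k+1) - x k‖),
      mul_nonneg hQL.le (sq_nonneg ‖η (k+1) - u k‖),
      mul_nonneg hγpos.le (sq_nonneg ‖η (k+1) - u (k+1)‖),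
      mul_nonneg hcα.le (sq_nonneg ‖p (k+1) - x (k+1)‖)]
  have hE0 : ∀ k, E k ≤ E 0 := by
    intro k
    induction k with
    | zero => exact le_rfl
    | succ n ih => exact le_trans (hEmono n) ih
  -- individual residual bounds from the step inequality
  have hres1 : ∀ k, (1/τ - 1/(2*β) - a)*‖p (k+1) - x k‖^2 ≤ E k - E (k+1) := by
    intro k
    linarith [Estep k, mul_nonneg hQL.le (sq_nonneg ‖η (k+1) - u k‖),
      mul_nonneg hγpos.le (sq_nonneg ‖η (k+1) - u (k+1)‖),
      mul_nonneg hcα.le (sq_nonneg ‖p (k+1) - x (k+1)‖)]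
  have hres2 : ∀ k, (1/γ - 1/(2*δ) - ‖L‖^2/a)*‖η (k+1) - u k‖^2 ≤ E k - E (k+1) := by
    intro k
    linarith [Estep k, mul_nonneg hPa.le (sq_nonneg ‖p (k+1) - x k‖),
      mul_nonneg hγpos.le (sq_nonneg ‖η (k+1) - u (k+1)‖),
      mul_nonneg hcα.le (sq_nonneg ‖p (k+1) - x (k+1)‖)]
  have hres3 : ∀ k, 1/γ*‖η (k+1) - u (k+1)‖^2 ≤ E k - E (k+1) := by
    intro k
    linarith [Estep k, mul_nonneg hPa.le (sq_nonneg ‖p (k+1) - x k‖),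
      mul_nonneg hQL.le (sq_nonneg ‖η (k+1) - u k‖),
      mul_nonneg hcα.le (sq_nonneg ‖p (k+1) - x (k+1)‖)]
  have hres4 : ∀ k, (1-α)/α*(1/τ)*‖p (k+1) - x (k+1)‖^2 ≤ E k - E (k+1) := by
    intro k
    linarith [Estep k, mul_nonneg hPa.le (sq_nonneg ‖p (k+1) - x k‖),
      mul_nonneg hQL.le (sq_nonneg ‖η (k+1) - u k‖),
      mul_nonneg hγpos.le (sq_nonneg ‖η (k+1) - u (k+1)‖)]
  -- summability of the energy differences
  have hsum : Summable (fun k => E k - E (k+1)) := by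
    apply summable_of_sum_range_le (c := E 0) (fun n => by linarith [hEmono n])
    intro n
    rw [Finset.sum_range_sub' (fun i => E i)]
    linarith [hEpos n]
  have hgtend : Tendsto (fun k => E k - E (k+1)) atTop (𝓝 0) := hsum.tendsto_atTop_zero
  -- tendsto statements
  have htend1 : Tendsto (fun k => p (k+1) - x k) atTop (𝓝 0) := by
    apply aux_tendsto_of_sq _ (fun k => (E k - E (k+1))/(1/τ - 1/(2*β) - a))
      (by simpa using hgtend.div_const _)
    intro k
    rw [le_div_iff₀ hPa]
    calc ‖p (k+1) - x k‖^2 * (1/τ - 1/(2*β) - a)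
        = (1/τ - 1/(2*β) - a)*‖p (k+1) - x k‖^2 := by ring
      _ ≤ E k - E (k+1) := hres1 k
  have htend2 : Tendsto (fun k => η (k+1) - u k) atTop (𝓝 0) := by
    apply aux_tendsto_of_sq _ (fun k => (E k - E (k+1))/(1/γ - 1/(2*δ) - ‖L‖^2/a))
      (by simpa using hgtend.div_const _)
    intro k
    rw [le_div_iff₀ hQL]
    calc ‖η (k+1) - u k‖^2 * (1/γ - 1/(2*δ) - ‖L‖^2/a)
        = (1/γ - 1/(2*δ) - ‖L‖^2/a)*‖η (k+1) - u k‖^2 := by ring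
      _ ≤ E k - E (k+1) := hres2 k
  have htend3 : Tendsto (fun k => η (k+1) - u (k+1)) atTop (𝓝 0) := by
    apply aux_tendsto_of_sq _ (fun k => (E k - E (k+1))/(1/γ)) (by simpa using hgtend.div_const (1/γ))
    intro k
    rw [le_div_iff₀ hγpos]
    calc ‖η (k+1) - u (k+1)‖^2 * (1/γ) = 1/γ*‖η (k+1) - u (k+1)‖^2 := by ring
      _ ≤ E k - E (k+1) := hres3 k
  have htend4 : Tendsto (fun k => p (k+1) - x (k+1)) atTop (𝓝 0) := by
    apply aux_tendsto_of_sq _ (fun k => (E k - E (k+1))/((1-α)/α*(1/τ)))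
      (by simpa using hgtend.div_const _)
    intro k
    rw [le_div_iff₀ hcα]
    calc ‖p (k+1) - x (k+1)‖^2 * ((1-α)/α*(1/τ))
        = (1-α)/α*(1/τ)*‖p (k+1) - x (k+1)‖^2 := by ring
      _ ≤ E k - E (k+1) := hres4 k
  -- boundedness of p and η
  have hE00 : 0 ≤ E 0 := hEpos 0
  have hxbd : ∀ k, ‖x k - xh‖ ≤ Real.sqrt (E 0 * τ) := by
    intro k
    have h1 : ‖x k - xh‖^2 / τ ≤ E 0 := by
      have h := Elb k
      have h' := hE0 k
      have hc : 1/τ * ‖x k - xh‖^2 = ‖x k - xh‖^2 / τ := by ring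
      linarith [mul_nonneg hQa.le (sq_nonneg ‖u k - uh‖)]
    exact (Real.le_sqrt (norm_nonneg _) (mul_nonneg hE00 hτ0.le)).2 ((div_le_iff₀ hτ0).1 h1)
  have hubd : ∀ k, ‖u k - uh‖ ≤ Real.sqrt (E 0 / (1/γ - ‖L‖^2/a)) := by
    intro k
    have h1 : ‖u k - uh‖^2 ≤ E 0 / (1/γ - ‖L‖^2/a) := by
      rw [le_div_iff₀ hQa]
      have h := Elb k
      have h' := hE0 k
      linarith [mul_nonneg (le_of_lt (show (0:ℝ) < 1/τ by positivity)) (sq_nonneg ‖x k - xh‖),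
        mul_comm (‖u k - uh‖^2) (1/γ - ‖L‖^2/a)]
    exact (Real.le_sqrt (norm_nonneg _) (div_nonneg hE00 hQa.le)).2 h1
  have hpebd : ∀ k, ‖p (k+1) - x k‖ ≤ Real.sqrt (E 0 / (1/τ - 1/(2*β) - a)) := by
    intro k
    have h1 : ‖p (k+1) - x k‖^2 ≤ E 0 / (1/τ - 1/(2*β) - a) := by
      rw [le_div_iff₀ hPa]
      have h := hres1 k
      have h' := hE0 k
      have h'' := hEpos (k+1)
      linarith [mul_comm (‖p (k+1) - x k‖^2) (1/τ - 1/(2*β) - a)]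
    exact (Real.le_sqrt (norm_nonneg _) (div_nonneg hE00 hPa.le)).2 h1
  have hηubd : ∀ k, ‖η (k+1) - u k‖ ≤ Real.sqrt (E 0 / (1/γ - 1/(2*δ) - ‖L‖^2/a)) := by
    intro k
    have h1 : ‖η (k+1) - u k‖^2 ≤ E 0 / (1/γ - 1/(2*δ) - ‖L‖^2/a) := by
      rw [le_div_iff₀ hQL]
      have h := hres2 k
      have h' := hE0 k
      have h'' := hEpos (k+1)
      linarith [mul_comm (‖η (k+1) - u k‖^2) (1/γ - 1/(2*δ) - ‖L‖^2/a)]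
    exact (Real.le_sqrt (norm_nonneg _) (div_nonneg hE00 hQL.le)).2 h1
  refine ⟨⟨max ‖p 0‖ (Real.sqrt (E 0 / (1/τ - 1/(2*β) - a))
      + (Real.sqrt (E 0 * τ) + ‖xh‖)), ?_⟩,
    ⟨max ‖η 0‖ (Real.sqrt (E 0 / (1/γ - 1/(2*δ) - ‖L‖^2/a))
      + (Real.sqrt (E 0 / (1/γ - ‖L‖^2/a)) + ‖uh‖)), ?_⟩, ?_, ?_, ?_, ?_⟩
  · intro k
    rcases k with _ | j
    · exact le_max_left _ _
    · refine le_trans ?_ (le_max_right _ _)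
      have h : p (j+1) = (p (j+1) - x j) + ((x j - xh) + xh) := by abel
      rw [h]
      refine le_trans (norm_add_le _ _) ?_
      have h2 := norm_add_le (x j - xh) xh
      have h3 := hpebd j
      have h4 := hxbd j
      linarith
  · intro k
    rcases k with _ | j
    · exact le_max_left _ _
    · refine le_trans ?_ (le_max_right _ _)
      have h : η (j+1) = (η (j+1) - u j) + ((u j - uh) + uh) := by abel
      rw [h]
      refine le_trans (norm_add_le _ _) ?_
      have h2 := norm_add_le (u j - uh) uh
      have h3 := hηubd j
      have h4 := hubd j
      linarith
  · have h : Tendsto (fun k => p k - x k) atTop (𝓝 0) :=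
      (tendsto_add_atTop_iff_nat 1).1 htend4
    have h' := h.neg
    simp only [neg_sub, neg_zero] at h'
    exact h'
  · have h : Tendsto (fun k => η k - u k) atTop (𝓝 0) :=
      (tendsto_add_atTop_iff_nat 1).1 htend3
    have h' := h.neg
    simp only [neg_sub, neg_zero] at h'
    exact h'
  · exact htend2
  · exact htend1
end

section
/- Let H and G be real Hilbert spaces and adopt the primal-dual algorithm setting with ρ > 0, χ = 0, D = 0, step sizes θ_k = 1/√(1 + 2ρτ_k), τ_{k+1} = θ_k τ_k, γ_{k+1} = γ_k/θ_k, τ₀ ∈ (0,2β), and γ₀ > 0 with γ₀ τ₀ ‖L‖² = 1 − τ₀/(2β). For every primal-dual solution (x̂, û), define Δ_k := ‖x^k − x̂‖²/τ_k + ‖u^k − û‖²/γ_k. Then for every integer k ≥ 1: Δ_k/τ_k ≥ Δ_{k+1}/τ_{k+1} + (1 − τ_k/(2β))·‖p^{k+1} − x^k‖²/τ_k² − (1 − τ_{k−1}/(2β))·‖p^k − x^{k−1}‖²/τ_{k−1}² + (2/τ_k)⟨L(p^{k+1} − x^k), η^{k+1} − û⟩ − (2/τ_{k−1})⟨L(p^k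 − x^{k−1}), η^k − û⟩. -/
open RealInnerProductSpace

lemma scalar_final
    (τk τj γk γk1 τk1 θj θk ρ β nL : ℝ)
    (a1 a2 a3 a4 b1 b2 b3 b4 d s0 s1 s2 t w : ℝ)
    (hτk : 0 < τk) (hτj : 0 < τj) (hγk : 0 < γk) (hτk1 : 0 < τk1)
    (hγk1 : 0 < γk1) (hθj : 0 < θj) (hβ : 0 < β) (hρ : 0 < ρ)
    (hrelτ : τk = θj * τj)
    (hrelτ1 : τk1 = θk * τk)
    (hγτ : γk1 * τk1 = γk * τk)
    (hθk : θk ^ 2 * (1 + 2 * ρ * τk) = 1)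
    (hcoef : θj ^ 2 * γk * nL ^ 2 / τk ≤ (1 - τj / (2 * β)) / τj ^ 2)
    (hI1 : ρ * a2 ≤ (a1 - a2 - a3) / (2 * τk) - (s1 + t) - w)
    (hI2 : 0 ≤ (b1 - b2 - b3) / (2 * γk) + t + θj * (s0 + s2))
    (hw : -w ≤ a3 / (4 * β))
    (hs2 : θj * s2 ≤ (θj ^ 2 * γk * nL ^ 2 / 2) * d + b3 / (2 * γk))
    (ha24 : a4 ≤ a2) (hb24 : b4 ≤ b2) (hd : 0 ≤ d) :
    (a1 / τk + b1 / γk) / τk ≥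
      (a4 / τk1 + b4 / γk1) / τk1
      + (1 - τk / (2 * β)) * a3 / τk ^ 2
      - (1 - τj / (2 * β)) * d / τj ^ 2
      + (2 / τk) * s1 - (2 / τj) * s0 := by
  have h0 : (0:ℝ) < 1 + 2 * ρ * τk := by positivity
  have hS : ρ * a2 + s1 - θj * s0 ≤
      (a1 - a2 - a3) / (2 * τk) + (b1 - b2) / (2 * γk)
      + (θj ^ 2 * γk * nL ^ 2 / 2) * d + a3 / (4 * β) := by
    have e1 : (b1 - b2 - b3) / (2 * γk) = (b1 - b2) / (2 * γk) - b3 / (2 * γk) := by ring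
    rw [e1] at hI2
    have e2 : θj * (s0 + s2) = θj * s0 + θj * s2 := by ring
    rw [e2] at hI2
    linarith
  have h1 : 0 ≤ (2 / τk) * ((a1 - a2 - a3) / (2 * τk) + (b1 - b2) / (2 * γk)
      + (θj ^ 2 * γk * nL ^ 2 / 2) * d + a3 / (4 * β) - (ρ * a2 + s1 - θj * s0)) :=
    mul_nonneg (by positivity) (by linarith)
  have h2 : 0 ≤ ((1 + 2 * ρ * τk) / τk ^ 2) * (a2 - a4) :=
    mul_nonneg (by positivity) (by linarith)
  have h3 : 0 ≤ (1 / (γk * τk)) * (b2 - b4) :=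
    mul_nonneg (by positivity) (by linarith)
  have h4 : 0 ≤ ((1 - τj / (2 * β)) / τj ^ 2 - θj ^ 2 * γk * nL ^ 2 / τk) * d :=
    mul_nonneg (by linarith) hd
  have hτk1sq : τk1 ^ 2 = τk ^ 2 / (1 + 2 * ρ * τk) := by
    rw [hrelτ1]; field_simp; linear_combination hθk
  have egoal : (a4 / τk1 + b4 / γk1) / τk1 =
      ((1 + 2 * ρ * τk) / τk ^ 2) * a4 + (1 / (γk * τk)) * b4 := by
    have e1 : (a4 / τk1 + b4 / γk1) / τk1 = a4 / τk1 ^ 2 + b4 / (γk1 * τk1) := by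
      field_simp
    rw [e1, hτk1sq, hγτ]
    field_simp
  rw [ge_iff_le, egoal]
  have eτj : τj = τk / θj := by rw [hrelτ]; field_simp
  have key : (a1 / τk + b1 / γk) / τk -
      (((1 + 2 * ρ * τk) / τk ^ 2) * a4 + (1 / (γk * τk)) * b4
      + (1 - τk / (2 * β)) * a3 / τk ^ 2
      - (1 - τj / (2 * β)) * d / τj ^ 2
      + (2 / τk) * s1 - (2 / τj) * s0) =
      (2 / τk) * ((a1 - a2 - a3) / (2 * τk) + (b1 - b2) / (2 * γk)
        + (θj ^ 2 * γk * nL ^ 2 / 2) * d + a3 / (4 * β) - (ρ * a2 + s1 - θj * s0))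
      + ((1 + 2 * ρ * τk) / τk ^ 2) * (a2 - a4)
      + (1 / (γk * τk)) * (b2 - b4)
      + ((1 - τj / (2 * β)) / τj ^ 2 - θj ^ 2 * γk * nL ^ 2 / τk) * d := by
    rw [eτj]
    field_simp
    ring
  linarith [key, h1, h2, h3, h4]

lemma inner_id_aux {H : Type*} [NormedAddCommGroup H] [InnerProductSpace ℝ H] (a b c : H) :
    ⟪a - b, c - a⟫ = (‖c - b‖ ^ 2 - ‖a - b‖ ^ 2 - ‖c - a‖ ^ 2) / 2 := by
  have h := norm_add_sq_real (c - a) (a - b)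
  rw [sub_add_sub_cancel] at h
  rw [real_inner_comm]
  linarith

set_option maxHeartbeats 1000000 in
/-- One-step recursion for Δ_k = ‖x^k − x̂‖²/τ_k + ‖u^k − û‖²/γ_k in the
accelerated (ρ > 0, χ = 0, D = 0) setting, for k ≥ 1. -/
theorem stmt_16 {H G : Type*}
    [NormedAddCommGroup H] [InnerProductSpace ℝ H] [CompleteSpace H]
    [NormedAddCommGroup G] [InnerProductSpace ℝ G] [CompleteSpace G]
    (V : Submodule ℝ G) [CompleteSpace V]
    (L : H →L[ℝ] G) (hL0 : L ≠ 0) (hran : ∀ z, L z ∈ V)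
    (ρ β : ℝ) (hρ : 0 < ρ) (hβ : 0 < β)
    (A : H → Set H)
    (hA : ∀ x y u v, u ∈ A x → v ∈ A y → ρ * ‖x - y‖ ^ 2 ≤ ⟪x - y, u - v⟫)
    (B : G → Set G)
    (hB : ∀ x y u v, u ∈ B x → v ∈ B y → 0 ≤ ⟪x - y, u - v⟫)
    (C : H → H) (hC : ∀ x y, β * ‖C x - C y‖ ^ 2 ≤ ⟪C x - C y, x - y⟫)
    (α : ℝ) (hα : α ∈ Set.Ioo (0 : ℝ) 1)
    (T : H → H) (hTfix : ∃ z, T z = z)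
    (hT : ∀ z y, T y = y → ‖T z - y‖ ^ 2 ≤ ‖z - y‖ ^ 2 - ((1 - α) / α) * ‖z - T z‖ ^ 2)
    (θ τ' γ' : ℕ → ℝ)
    (hτ0 : τ' 0 ∈ Set.Ioo (0 : ℝ) (2 * β)) (hγ0 : 0 < γ' 0)
    (hθdef : ∀ k, θ k = 1 / Real.sqrt (1 + 2 * ρ * τ' k))
    (hτrec : ∀ k, τ' (k + 1) = θ k * τ' k)
    (hγrec : ∀ k, γ' (k + 1) = γ' k / θ k)
    (hpar : γ' 0 * τ' 0 * ‖L‖ ^ 2 = 1 - τ' 0 / (2 * β))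
    (x p xb : ℕ → H) (u η : ℕ → G)
    (hxb0 : xb 0 = x 0)
    (halg1 : ∀ k, (γ' k)⁻¹ • (u k - η (k + 1)) + L (xb k) ∈ B (η (k + 1)))
    (halg2 : ∀ k, u (k + 1) = (Submodule.orthogonalProjection V (η (k + 1)) : G))
    (halg3 : ∀ k, (τ' k)⁻¹ • (x k - p (k + 1))
        - (ContinuousLinearMap.adjoint L) (u (k + 1)) - C (x k) ∈ A (p (k + 1)))
    (halg4 : ∀ k, x (k + 1) = T (p (k + 1)))
    (halg5 : ∀ k, xb (k + 1) = x (k + 1) + θ k • (p (k + 1) - x k)) :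
    ∀ (xhat : H) (uhat : G), T xhat = xhat → uhat ∈ V →
      -(ContinuousLinearMap.adjoint L) uhat - C xhat ∈ A xhat →
      L xhat ∈ B uhat →
      ∀ k : ℕ, 1 ≤ k →
        (‖x k - xhat‖ ^ 2 / τ' k + ‖u k - uhat‖ ^ 2 / γ' k) / τ' k ≥
          (‖x (k + 1) - xhat‖ ^ 2 / τ' (k + 1) + ‖u (k + 1) - uhat‖ ^ 2 / γ' (k + 1))
              / τ' (k + 1)
          + (1 - τ' k / (2 * β)) * ‖p (k + 1) - x k‖ ^ 2 / τ' k ^ 2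
          - (1 - τ' (k - 1) / (2 * β)) * ‖p k - x (k - 1)‖ ^ 2 / τ' (k - 1) ^ 2
          + (2 / τ' k) * ⟪L (p (k + 1) - x k), η (k + 1) - uhat⟫
          - (2 / τ' (k - 1)) * ⟪L (p k - x (k - 1)), η k - uhat⟫ := by
  -- basic positivity facts about the parameter sequences
  have hτpos : ∀ k, 0 < τ' k := by
    intro k
    induction k with
    | zero => exact hτ0.1
    | succ n ih =>
      rw [hτrec, hθdef]
      have h1 : (0:ℝ) < 1 + 2 * ρ * τ' n := by positivity
      have h2 : 0 < Real.sqrt (1 + 2 * ρ * τ' n) := Real.sqrt_pos.mpr h1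
      positivity
  have hθpos : ∀ k, 0 < θ k := by
    intro k
    rw [hθdef]
    have h1 : (0:ℝ) < 1 + 2 * ρ * τ' k := by have := hτpos k; positivity
    have h2 : 0 < Real.sqrt (1 + 2 * ρ * τ' k) := Real.sqrt_pos.mpr h1
    positivity
  have hθlt1 : ∀ k, θ k < 1 := by
    intro k
    rw [hθdef]
    have h1 : (1:ℝ) < 1 + 2 * ρ * τ' k := by have := hτpos k; nlinarith
    have h2 : 1 < Real.sqrt (1 + 2 * ρ * τ' k) := by
      have h3 : Real.sqrt 1 < Real.sqrt (1 + 2 * ρ * τ' k) :=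
        Real.sqrt_lt_sqrt (by norm_num) h1
      rwa [Real.sqrt_one] at h3
    rw [div_lt_one (by linarith)]
    exact h2
  have hθsq : ∀ k, θ k ^ 2 * (1 + 2 * ρ * τ' k) = 1 := by
    intro k
    have h1 : (0:ℝ) < 1 + 2 * ρ * τ' k := by have := hτpos k; positivity
    rw [hθdef, div_pow, one_pow, Real.sq_sqrt h1.le]
    field_simp
  have hγpos : ∀ k, 0 < γ' k := by
    intro k
    induction k with
    | zero => exact hγ0
    | succ n ih => rw [hγrec]; exact div_pos ih (hθpos n)
  have hγτconst : ∀ k, γ' k * τ' k = γ' 0 * τ' 0 := by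
    intro k
    induction k with
    | zero => rfl
    | succ n ih =>
      rw [hγrec, hτrec, ← ih]
      have hne := (hθpos n).ne'
      field_simp
  have hτle : ∀ k, τ' k ≤ τ' 0 := by
    intro k
    induction k with
    | zero => exact le_refl _
    | succ n ih =>
      rw [hτrec]
      have := hτpos n
      have := hθlt1 n
      have := hθpos n
      nlinarith
  intro xhat uhat hfix huV hAh hBh k hk
  obtain ⟨j, rfl⟩ : ∃ j, k = j + 1 := ⟨k - 1, (Nat.succ_pred_eq_of_pos hk).symm⟩
  simp only [Nat.add_sub_cancel]
  -- the coefficient inequality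
  have hcoef : θ j ^ 2 * γ' (j + 1) * ‖L‖ ^ 2 / τ' (j + 1) ≤
      (1 - τ' j / (2 * β)) / τ' j ^ 2 := by
    have hc1 : γ' j * τ' j * ‖L‖ ^ 2 ≤ 1 - τ' j / (2 * β) := by
      rw [hγτconst j, hpar]
      have : τ' j / (2 * β) ≤ τ' 0 / (2 * β) := by
        gcongr
        exact hτle j
      linarith
    have e : θ j ^ 2 * γ' (j + 1) * ‖L‖ ^ 2 / τ' (j + 1) =
        (γ' j * τ' j * ‖L‖ ^ 2) / τ' j ^ 2 := by
      rw [hγrec, hτrec]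
      have h1 := hθpos j
      have h2 := hτpos j
      field_simp
    rw [e]
    gcongr
  -- abbreviation facts at the relevant indices
  have hτk := hτpos (j + 1)
  have hτj := hτpos j
  have hγk := hγpos (j + 1)
  have hτk1 := hτpos (j + 2)
  have hγk1 := hγpos (j + 2)
  have hθjp := hθpos j
  -- the coercivity bound hw
  set Δ : H := C (x (j + 1)) - C xhat with hΔ
  have hwb : -(⟪p (j + 2) - xhat, Δ⟫) ≤ ‖p (j + 2) - x (j + 1)‖ ^ 2 / (4 * β) := by
    have hco := hC (x (j + 1)) xhat
    have hsplit : (⟪p (j + 2) - xhat, Δ⟫ : ℝ) =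
        ⟪p (j + 2) - x (j + 1), Δ⟫ + ⟪x (j + 1) - xhat, Δ⟫ := by
      rw [← inner_add_left]
      congr 1
      abel
    have hcs : |(⟪p (j + 2) - x (j + 1), Δ⟫ : ℝ)| ≤ ‖p (j + 2) - x (j + 1)‖ * ‖Δ‖ :=
      abs_real_inner_le_norm _ _
    have hcomm : (⟪x (j + 1) - xhat, Δ⟫ : ℝ) = ⟪Δ, x (j + 1) - xhat⟫ := real_inner_comm _ _
    rw [le_div_iff₀ (by positivity)]
    have habs := abs_le.mp hcs
    nlinarith [sq_nonneg (‖p (j + 2) - x (j + 1)‖ - 2 * β * ‖Δ‖), hβ, hco, habs.1]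
  -- hI1 : strong monotonicity of A
  have hmono := hA (p (j + 2)) xhat _ _ (halg3 (j + 1)) hAh
  have expand : ((τ' (j + 1))⁻¹ • (x (j + 1) - p (j + 2))
      - (ContinuousLinearMap.adjoint L) (u (j + 2)) - C (x (j + 1)))
      - (-(ContinuousLinearMap.adjoint L) uhat - C xhat) =
      (τ' (j + 1))⁻¹ • (x (j + 1) - p (j + 2))
      - (ContinuousLinearMap.adjoint L) (u (j + 2) - uhat) - Δ := by
    rw [map_sub, hΔ]
    abel
  rw [expand, inner_sub_right, inner_sub_right, real_inner_smul_right,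
    ContinuousLinearMap.adjoint_inner_right] at hmono
  -- transfer from u (j+2) to η (j+2)
  have hVtrans : ∀ w : G, w ∈ V → ∀ m : ℕ, (⟪w, u (m + 1)⟫ : ℝ) = ⟪w, η (m + 1)⟫ := by
    intro w hw m
    have h : (⟪η (m + 1) - (Submodule.orthogonalProjection V (η (m + 1)) : G), w⟫ : ℝ) = 0 :=
      Submodule.starProjection_inner_eq_zero (η (m + 1)) w hw
    rw [inner_sub_left] at h
    rw [halg2 m]
    have h2 : (⟪w, ((Submodule.orthogonalProjection V (η (m + 1)) : G))⟫ : ℝ) =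
        ⟪((Submodule.orthogonalProjection V (η (m + 1)) : G)), w⟫ := real_inner_comm _ _
    have h3 : (⟪w, η (m + 1)⟫ : ℝ) = ⟪η (m + 1), w⟫ := real_inner_comm _ _
    rw [h2, h3]
    linarith
  have htrans1 : (⟪L (p (j + 2) - xhat), u (j + 2) - uhat⟫ : ℝ) =
      ⟪L (p (j + 2) - xhat), η (j + 2) - uhat⟫ := by
    rw [inner_sub_right, inner_sub_right, hVtrans _ (hran _) (j + 1)]
  rw [htrans1] at hmono
  -- split L (p (j+2) - xhat)
  have hsplitL : (⟪L (p (j + 2) - xhat), η (j + 2) - uhat⟫ : ℝ) =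
      ⟪L (p (j + 2) - x (j + 1)), η (j + 2) - uhat⟫
      + ⟪L (x (j + 1) - xhat), η (j + 2) - uhat⟫ := by
    rw [← inner_add_left, ← map_add]
    congr 2
    abel
  rw [hsplitL] at hmono
  have hid1 : (⟪p (j + 2) - xhat, x (j + 1) - p (j + 2)⟫ : ℝ) =
      (‖x (j + 1) - xhat‖ ^ 2 - ‖p (j + 2) - xhat‖ ^ 2
        - ‖p (j + 2) - x (j + 1)‖ ^ 2) / 2 := by
    rw [inner_id_aux, norm_sub_rev (x (j+1)) (p (j+2))]
  rw [hid1] at hmono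
  have hI1 : ρ * ‖p (j + 2) - xhat‖ ^ 2 ≤
      (‖x (j + 1) - xhat‖ ^ 2 - ‖p (j + 2) - xhat‖ ^ 2
        - ‖p (j + 2) - x (j + 1)‖ ^ 2) / (2 * τ' (j + 1))
      - (⟪L (p (j + 2) - x (j + 1)), η (j + 2) - uhat⟫
        + ⟪L (x (j + 1) - xhat), η (j + 2) - uhat⟫)
      - ⟪p (j + 2) - xhat, Δ⟫ := by
    have e : (τ' (j + 1))⁻¹ * ((‖x (j + 1) - xhat‖ ^ 2 - ‖p (j + 2) - xhat‖ ^ 2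
        - ‖p (j + 2) - x (j + 1)‖ ^ 2) / 2) =
        (‖x (j + 1) - xhat‖ ^ 2 - ‖p (j + 2) - xhat‖ ^ 2
        - ‖p (j + 2) - x (j + 1)‖ ^ 2) / (2 * τ' (j + 1)) := by
      rw [inv_mul_eq_div, div_div]
    linarith [hmono, e.symm.le, e.le]
  -- hI2 : monotonicity of B
  have hmB := hB (η (j + 2)) uhat _ _ (halg1 (j + 1)) hBh
  have expandB : ((γ' (j + 1))⁻¹ • (u (j + 1) - η (j + 2)) + L (xb (j + 1))) - L xhat =
      (γ' (j + 1))⁻¹ • (u (j + 1) - η (j + 2)) + L (xb (j + 1) - xhat) := by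
    rw [map_sub]; abel
  rw [expandB, inner_add_right, real_inner_smul_right] at hmB
  have hxbsplit : xb (j + 1) - xhat = (x (j + 1) - xhat) + θ j • (p (j + 1) - x j) := by
    rw [halg5 j]; abel
  have hsplitB : (⟪η (j + 2) - uhat, L (xb (j + 1) - xhat)⟫ : ℝ) =
      ⟪L (x (j + 1) - xhat), η (j + 2) - uhat⟫
      + θ j * ⟪L (p (j + 1) - x j), η (j + 2) - uhat⟫ := by
    rw [hxbsplit, map_add, map_smul, inner_add_right, inner_smul_right,
      real_inner_comm (η (j+2) - uhat) (L (x (j+1) - xhat)),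
      real_inner_comm (η (j+2) - uhat) (L (p (j+1) - x j))]
  rw [hsplitB] at hmB
  have hsplitB2 : (⟪L (p (j + 1) - x j), η (j + 2) - uhat⟫ : ℝ) =
      ⟪L (p (j + 1) - x j), η (j + 1) - uhat⟫
      + ⟪L (p (j + 1) - x j), η (j + 2) - u (j + 1)⟫ := by
    rw [inner_sub_right, inner_sub_right, inner_sub_right,
      ← hVtrans (L (p (j + 1) - x j)) (hran _) j]
    ring
  rw [hsplitB2] at hmB
  have hid2 : (⟪η (j + 2) - uhat, u (j + 1) - η (j + 2)⟫ : ℝ) =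
      (‖u (j + 1) - uhat‖ ^ 2 - ‖η (j + 2) - uhat‖ ^ 2 - ‖u (j + 1) - η (j + 2)‖ ^ 2) / 2 := by
    rw [inner_id_aux]
  rw [hid2] at hmB
  have hI2 : 0 ≤ (‖u (j + 1) - uhat‖ ^ 2 - ‖η (j + 2) - uhat‖ ^ 2
        - ‖u (j + 1) - η (j + 2)‖ ^ 2) / (2 * γ' (j + 1))
      + ⟪L (x (j + 1) - xhat), η (j + 2) - uhat⟫
      + θ j * (⟪L (p (j + 1) - x j), η (j + 1) - uhat⟫
        + ⟪L (p (j + 1) - x j), η (j + 2) - u (j + 1)⟫) := by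
    have e : (γ' (j + 1))⁻¹ * ((‖u (j + 1) - uhat‖ ^ 2 - ‖η (j + 2) - uhat‖ ^ 2
        - ‖u (j + 1) - η (j + 2)‖ ^ 2) / 2) =
        (‖u (j + 1) - uhat‖ ^ 2 - ‖η (j + 2) - uhat‖ ^ 2
        - ‖u (j + 1) - η (j + 2)‖ ^ 2) / (2 * γ' (j + 1)) := by
      rw [inv_mul_eq_div, div_div]
    linarith [hmB, e.le, e.symm.le]
  -- Young's inequality bound hs2
  have hs2 : θ j * ⟪L (p (j + 1) - x j), η (j + 2) - u (j + 1)⟫ ≤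
      (θ j ^ 2 * γ' (j + 1) * ‖L‖ ^ 2 / 2) * ‖p (j + 1) - x j‖ ^ 2
      + ‖u (j + 1) - η (j + 2)‖ ^ 2 / (2 * γ' (j + 1)) := by
    rw [norm_sub_rev (u (j + 1)) (η (j + 2))]
    set a := ‖L‖ * ‖p (j + 1) - x j‖ with ha
    set b := ‖η (j + 2) - u (j + 1)‖ with hb
    have h1 : (⟪L (p (j + 1) - x j), η (j + 2) - u (j + 1)⟫ : ℝ) ≤
        ‖L (p (j + 1) - x j)‖ * b := real_inner_le_norm _ _
    have h2 : ‖L (p (j + 1) - x j)‖ ≤ a := L.le_opNorm _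
    have h3 : (⟪L (p (j + 1) - x j), η (j + 2) - u (j + 1)⟫ : ℝ) ≤ a * b :=
      h1.trans (mul_le_mul_of_nonneg_right h2 (norm_nonneg _))
    have h4 := mul_le_mul_of_nonneg_left h3 hθjp.le
    have h5 : θ j * (a * b) ≤ θ j ^ 2 * γ' (j + 1) * a ^ 2 / 2 + b ^ 2 / (2 * γ' (j + 1)) := by
      rw [div_add_div _ _ two_ne_zero (by positivity), le_div_iff₀ (by positivity)]
      nlinarith [sq_nonneg (γ' (j + 1) * θ j * a - b), hγk]
    have h6 : θ j ^ 2 * γ' (j + 1) * a ^ 2 / 2 =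
        (θ j ^ 2 * γ' (j + 1) * ‖L‖ ^ 2 / 2) * ‖p (j + 1) - x j‖ ^ 2 := by
      rw [ha]; ring
    linarith [h4, h5, h6.le, h6.ge]
  -- ha24 : quasi-nonexpansiveness of T
  have ha24 : ‖x (j + 2) - xhat‖ ^ 2 ≤ ‖p (j + 2) - xhat‖ ^ 2 := by
    have hT1 := hT (p (j + 2)) xhat hfix
    have hα1 : 0 ≤ (1 - α) / α * ‖p (j + 2) - T (p (j + 2))‖ ^ 2 := by
      have : 0 ≤ (1 - α) / α := div_nonneg (by linarith [hα.2]) hα.1.le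
      positivity
    rw [halg4 (j + 1)]
    linarith
  -- hb24 : projection is nonexpansive
  have hb24 : ‖u (j + 2) - uhat‖ ^ 2 ≤ ‖η (j + 2) - uhat‖ ^ 2 := by
    set Pη : G := (Submodule.orthogonalProjection V (η (j + 2)) : G) with hPη
    have hu2 : u (j + 2) = Pη := halg2 (j + 1)
    have hmem : Pη - uhat ∈ V := sub_mem (Submodule.orthogonalProjection V (η (j + 2))).2 huV
    have horth : (⟪η (j + 2) - Pη, Pη - uhat⟫ : ℝ) = 0 :=
      Submodule.starProjection_inner_eq_zero (η (j + 2)) _ hmem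
    have hdecomp : η (j + 2) - uhat = (η (j + 2) - Pη) + (Pη - uhat) := by abel
    have hpyth := norm_add_sq_real (η (j + 2) - Pη) (Pη - uhat)
    rw [← hdecomp, horth] at hpyth
    rw [hu2]
    nlinarith [sq_nonneg ‖η (j + 2) - Pη‖]
  -- apply the scalar lemma
  exact scalar_final (τ' (j + 1)) (τ' j) (γ' (j + 1)) (γ' (j + 2)) (τ' (j + 2))
    (θ j) (θ (j + 1)) ρ β ‖L‖
    (‖x (j + 1) - xhat‖ ^ 2) (‖p (j + 2) - xhat‖ ^ 2) (‖p (j + 2) - x (j + 1)‖ ^ 2)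
    (‖x (j + 2) - xhat‖ ^ 2) (‖u (j + 1) - uhat‖ ^ 2) (‖η (j + 2) - uhat‖ ^ 2)
    (‖u (j + 1) - η (j + 2)‖ ^ 2) (‖u (j + 2) - uhat‖ ^ 2) (‖p (j + 1) - x j‖ ^ 2)
    (⟪L (p (j + 1) - x j), η (j + 1) - uhat⟫) (⟪L (p (j + 2) - x (j + 1)), η (j + 2) - uhat⟫)
    (⟪L (p (j + 1) - x j), η (j + 2) - u (j + 1)⟫)
    (⟪L (x (j + 1) - xhat), η (j + 2) - uhat⟫) (⟪p (j + 2) - xhat, Δ⟫)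
    hτk hτj hγk hτk1 hγk1 hθjp hβ hρ
    (hτrec j) (hτrec (j + 1)) (by rw [hγrec (j+1), hτrec (j+1)]; field_simp [ne_of_gt (hθpos (j+1))])
    (hθsq (j + 1)) hcoef hI1 hI2 hwb hs2 ha24 hb24 (by positivity)
end
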